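/- arXiv:1201.2834 — 3 statements merged into one kernel-verified Lean document; each statement's English description precedes it below -/
import Mathlib

section
/- Let γ be a proper player-1 selector, let v = ⟨1⟩val^{γ̄}(Reach(T)), let I = {s ∈ S ∖ (T ∪ W₂) | Pre₁(v)(s) > v(s)}, and let γ' be a player-1 selector that agrees with γ at all states not in I and satisfies Pre_{1:γ'}(v)(s) = Pre₁(v)(s) > v(s) for all s ∈ I. Let v' = ⟨1⟩val^{γ̄'}(Reach(T)). Then v'(s) ≥ Pre₁(v)(s) for all states s; consequently v'(s) ≥ v(s) for all states s, and v'(s) > v(s) for all s ∈ I. -/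
open scoped Classical

/-- A (two-player) concurrent game structure: a finite state space `S`, a finite
set `M` of moves, move assignments `Γ₁ Γ₂ : S → Finset M`, and a probabilistic
transition function `δ`. -/
structure CGame (S : Type) (M : Type) where
  Γ₁ : S → Finset M
  Γ₂ : S → Finset M
  δ : S → M → M → S → ℝ

namespace CGame

variable {S M : Type} [Fintype S] [DecidableEq S] [Fintype M] [DecidableEq M]

/-- Well-formedness of a concurrent game structure: move sets are nonempty and
`δ s a b` is a probability distribution over states. -/
def IsGame (G : CGame S M) : Prop :=
  (∀ s, (G.Γ₁ s).Nonempty) ∧ (∀ s, (G.Γ₂ s).Nonempty) ∧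
    (∀ s a b t, 0 ≤ G.δ s a b t) ∧ (∀ s a b, (∑ t, G.δ s a b t) = 1)

/-- `x : M → ℝ` is a probability distribution supported on `A`. -/
def IsDistOn (A : Finset M) (x : M → ℝ) : Prop :=
  (∀ a, 0 ≤ x a) ∧ (∀ a, x a ≠ 0 → a ∈ A) ∧ (∑ a, x a) = 1

/-- A selector for player 1. -/
def IsSel1 (G : CGame S M) (ξ : S → M → ℝ) : Prop := ∀ s, IsDistOn (G.Γ₁ s) (ξ s)

/-- A selector for player 2. -/
def IsSel2 (G : CGame S M) (ξ : S → M → ℝ) : Prop := ∀ s, IsDistOn (G.Γ₂ s) (ξ s)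

/-- A strategy for player 1: maps a history (past states `w` and current state `s`)
to a distribution over the moves available at `s`. -/
def IsStrat1 (G : CGame S M) (σ : List S → S → M → ℝ) : Prop :=
  ∀ w s, IsDistOn (G.Γ₁ s) (σ w s)

/-- A strategy for player 2. -/
def IsStrat2 (G : CGame S M) (σ : List S → S → M → ℝ) : Prop :=
  ∀ w s, IsDistOn (G.Γ₂ s) (σ w s)

/-- The memoryless strategy induced by a selector. -/
def ml (ξ : S → M → ℝ) : List S → S → M → ℝ := fun _ s => ξ s

/-- The pure (Dirac) distribution on a move `b`. -/
def pureDist (b : M) : M → ℝ := fun b' => if b' = b then 1 else 0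

/-- The player-1 selector choosing all available moves uniformly at random. -/
noncomputable def uniformSel (G : CGame S M) : S → M → ℝ :=
  fun s a => if a ∈ G.Γ₁ s then (1 : ℝ) / (G.Γ₁ s).card else 0

/-- Probability of reaching `T` within `n` steps, starting from history `w`
and current state `s`, under strategies `σ₁, σ₂`. -/
noncomputable def reachW (G : CGame S M) (σ₁ σ₂ : List S → S → M → ℝ) (T : Set S) :
    ℕ → List S → S → ℝ
  | 0, _, s => if s ∈ T then 1 else 0
  | n + 1, w, s =>
      if s ∈ T then 1
      else ∑ a : M, ∑ b : M, ∑ t : S,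
        σ₁ w s a * σ₂ w s b * G.δ s a b t * reachW G σ₁ σ₂ T n (w ++ [s]) t

/-- Probability of staying in `F` for `n` steps, starting from history `w`
and current state `s`, under strategies `σ₁, σ₂`. -/
noncomputable def safeW (G : CGame S M) (σ₁ σ₂ : List S → S → M → ℝ) (F : Set S) :
    ℕ → List S → S → ℝ
  | 0, _, s => if s ∈ F then 1 else 0
  | n + 1, w, s =>
      if s ∈ F then
        ∑ a : M, ∑ b : M, ∑ t : S,
          σ₁ w s a * σ₂ w s b * G.δ s a b t * safeW G σ₁ σ₂ F n (w ++ [s]) t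
      else 0

/-- `Pr_s^{σ₁,σ₂}(Reach T)`: probability of eventually reaching `T` from `s`. -/
noncomputable def prReach (G : CGame S M) (σ₁ σ₂ : List S → S → M → ℝ) (T : Set S)
    (s : S) : ℝ :=
  ⨆ n : ℕ, reachW G σ₁ σ₂ T n [] s

/-- `Pr_s^{σ₁,σ₂}(Safe F)`: probability that the play stays in `F` forever. -/
noncomputable def prSafe (G : CGame S M) (σ₁ σ₂ : List S → S → M → ℝ) (F : Set S)
    (s : S) : ℝ :=
  ⨅ n : ℕ, safeW G σ₁ σ₂ F n [] s

/-- `⟨1⟩val^{σ₁}(Reach T)(s) = inf_{σ₂} Pr_s^{σ₁,σ₂}(Reach T)`. -/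
noncomputable def valReachUnder (G : CGame S M) (σ₁ : List S → S → M → ℝ) (T : Set S)
    (s : S) : ℝ :=
  ⨅ σ₂ : {σ // IsStrat2 G σ}, prReach G σ₁ σ₂.1 T s

/-- `⟨1⟩val(Reach T)(s) = sup_{σ₁} inf_{σ₂} Pr_s^{σ₁,σ₂}(Reach T)`. -/
noncomputable def valReach (G : CGame S M) (T : Set S) (s : S) : ℝ :=
  ⨆ σ₁ : {σ // IsStrat1 G σ}, valReachUnder G σ₁.1 T s

/-- `⟨1⟩val^{σ₁}(Safe F)(s) = inf_{σ₂} Pr_s^{σ₁,σ₂}(Safe F)`. -/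
noncomputable def valSafeUnder (G : CGame S M) (σ₁ : List S → S → M → ℝ) (F : Set S)
    (s : S) : ℝ :=
  ⨅ σ₂ : {σ // IsStrat2 G σ}, prSafe G σ₁ σ₂.1 F s

/-- `⟨1⟩val(Safe F)(s) = sup_{σ₁} inf_{σ₂} Pr_s^{σ₁,σ₂}(Safe F)`. -/
noncomputable def valSafe (G : CGame S M) (F : Set S) (s : S) : ℝ :=
  ⨆ σ₁ : {σ // IsStrat1 G σ}, valSafeUnder G σ₁.1 F s

/-- `W₂ = {s | ⟨1⟩val(Reach T)(s) = 0}`. -/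
noncomputable def W2 (G : CGame S M) (T : Set S) : Set S := {s | valReach G T s = 0}

/-- `W₁ = {s | ⟨1⟩val(Safe F)(s) = 1}`. -/
noncomputable def W1 (G : CGame S M) (F : Set S) : Set S := {s | valSafe G F s = 1}

/-- A state is absorbing if for all moves the successor is the state itself. -/
def Absorbing (G : CGame S M) (s : S) : Prop := ∀ a b, G.δ s a b s = 1

/-- A player-1 strategy is proper if against every player-2 strategy, from every
state the set `T ∪ W₂` is reached with probability 1. -/
noncomputable def Proper (G : CGame S M) (T : Set S) (σ₁ : List S → S → M → ℝ) : Prop :=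
  ∀ σ₂, IsStrat2 G σ₂ → ∀ s, prReach G σ₁ σ₂ (T ∪ W2 G T) s = 1

/-- `Pre_{ξ₁,ξ₂}(v)(s)`: one-step expectation of `v` at `s` when the players use the
one-state selectors `x, y`. -/
noncomputable def preSS (G : CGame S M) (v : S → ℝ) (s : S) (x y : M → ℝ) : ℝ :=
  ∑ a : M, ∑ b : M, ∑ t : S, v t * G.δ s a b t * x a * y b

/-- `Pre_{1:ξ₁}(v)(s) = inf_{ξ₂} Pre_{ξ₁,ξ₂}(v)(s)`. -/
noncomputable def pre1Sel (G : CGame S M) (v : S → ℝ) (s : S) (x : M → ℝ) : ℝ :=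
  ⨅ y : {y : M → ℝ // IsDistOn (G.Γ₂ s) y}, preSS G v s x y.1

/-- `Pre₁(v)(s) = sup_{ξ₁} inf_{ξ₂} Pre_{ξ₁,ξ₂}(v)(s)`. -/
noncomputable def pre1 (G : CGame S M) (v : S → ℝ) (s : S) : ℝ :=
  ⨆ x : {x : M → ℝ // IsDistOn (G.Γ₁ s) x}, pre1Sel G v s x.1

/-- The value-iteration sequence: `u 0 = [T]`, `u (k+1) = Pre₁ (u k)`. -/
noncomputable def valIter (G : CGame S M) (T : Set S) : ℕ → S → ℝ
  | 0 => fun s => if s ∈ T then 1 else 0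
  | n + 1 => fun s => pre1 G (valIter G T n) s

/-- The entry time `ℓ_k(s) = min {j ≤ k | u_j(s) = u_k(s)}`. -/
noncomputable def entryTime (G : CGame S M) (T : Set S) (k : ℕ) (s : S) : ℕ :=
  sInf {j : ℕ | valIter G T j s = valIter G T k s}

/-- `dest(s,b)` under a player-1 selector `η`: possible successors of `s` when
player 1 plays `η` and player 2 plays `b`. -/
def destSet (G : CGame S M) (η : S → M → ℝ) (s : S) (b : M) : Set S :=
  {t | ∃ a, η s a ≠ 0 ∧ G.δ s a b t ≠ 0}

/-- `OptSel(v,s)`: the set of optimal one-state player-1 selectors for `v` at `s`. -/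
noncomputable def OptSel (G : CGame S M) (v : S → ℝ) (s : S) : Set (M → ℝ) :=
  {x | IsDistOn (G.Γ₁ s) x ∧ pre1Sel G v s x = pre1 G v s}

/-- `CountOpt(v,s,x)`: the set of counter-optimal player-2 moves against `x`. -/
noncomputable def countOpt (G : CGame S M) (v : S → ℝ) (s : S) (x : M → ℝ) : Finset M :=
  (G.Γ₂ s).filter fun b => preSS G v s x (pureDist b) = pre1 G v s

/-- The support of a one-state selector, as a `Finset`. -/
noncomputable def fsupp (x : M → ℝ) : Finset M := Finset.univ.filter fun a => x a ≠ 0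

/-- `OptSelCount(v,s)`: pairs `(A,B)` such that some optimal selector has support `A`
and counter-optimal action set `B`. -/
noncomputable def optSelCount (G : CGame S M) (v : S → ℝ) (s : S) :
    Set (Finset M × Finset M) :=
  {p | ∃ x ∈ OptSel G v s, fsupp x = p.1 ∧ countOpt G v s x = p.2}

/-- A selector is `k`-uniform if every probability it assigns is of the form `i/j`
with `0 ≤ i ≤ j ≤ k`. -/
def KUniform (k : ℕ) (ξ : S → M → ℝ) : Prop :=
  ∀ s a, ∃ i j : ℕ, i ≤ j ∧ j ≤ k ∧ ξ s a = (i : ℝ) / (j : ℝ)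

end CGame
namespace CGame

section SI

set_option linter.unusedSectionVars false

variable {S M : Type} [Fintype S] [DecidableEq S] [Fintype M] [DecidableEq M]

/-! ### Basic distribution facts -/

lemma isDistOn_uniform (A : Finset M) (hA : A.Nonempty) :
    IsDistOn A (fun b => if b ∈ A then ((1 : ℝ) / A.card) else 0) := by
  have hc : (0:ℝ) < (A.card : ℝ) := by exact_mod_cast Finset.card_pos.2 hA
  refine ⟨fun a => ?_, fun a h => ?_, ?_⟩
  · dsimp only; split
    · positivity
    · exact le_rfl
  · by_contra hb; simp only [hb, if_false] at h; exact h rfl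
  · rw [Finset.sum_ite_mem, Finset.univ_inter, Finset.sum_const, nsmul_eq_mul]
    field_simp

noncomputable def unif2 (G : CGame S M) : S → M → ℝ :=
  fun s b => if b ∈ G.Γ₂ s then (1 : ℝ) / (G.Γ₂ s).card else 0

lemma unif2_isSel2 {G : CGame S M} (hG : G.IsGame) : IsSel2 G (unif2 G) :=
  fun s => isDistOn_uniform _ (hG.2.1 s)

lemma uniformSel_isSel1 {G : CGame S M} (hG : G.IsGame) : IsSel1 G (uniformSel G) :=
  fun s => isDistOn_uniform _ (hG.1 s)

lemma strat2_nonempty {G : CGame S M} (hG : G.IsGame) : Nonempty {σ // IsStrat2 G σ} :=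
  ⟨⟨ml (unif2 G), fun _ s => unif2_isSel2 hG s⟩⟩

lemma strat1_nonempty {G : CGame S M} (hG : G.IsGame) : Nonempty {σ // IsStrat1 G σ} :=
  ⟨⟨ml (uniformSel G), fun _ s => uniformSel_isSel1 hG s⟩⟩

lemma dist2_nonempty {G : CGame S M} (hG : G.IsGame) (s : S) :
    Nonempty {y : M → ℝ // IsDistOn (G.Γ₂ s) y} := ⟨⟨unif2 G s, unif2_isSel2 hG s⟩⟩

lemma dist1_nonempty {G : CGame S M} (hG : G.IsGame) (s : S) :
    Nonempty {x : M → ℝ // IsDistOn (G.Γ₁ s) x} := ⟨⟨uniformSel G s, uniformSel_isSel1 hG s⟩⟩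

lemma bddAbove_range_of_le {ι : Sort*} {f : ι → ℝ} {c : ℝ} (h : ∀ i, f i ≤ c) :
    BddAbove (Set.range f) := ⟨c, by rintro y ⟨i, rfl⟩; exact h i⟩

lemma bddBelow_range_of_le {ι : Sort*} {f : ι → ℝ} {c : ℝ} (h : ∀ i, c ≤ f i) :
    BddBelow (Set.range f) := ⟨c, by rintro y ⟨i, rfl⟩; exact h i⟩

/-! ### One-step expectation `trip` -/

/-- One-step expectation of `f` at `s` under one-state distributions `x, y`. -/
noncomputable def trip (G : CGame S M) (s : S) (x y : M → ℝ) (f : S → ℝ) : ℝ :=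
  ∑ a : M, ∑ b : M, ∑ t : S, x a * y b * G.δ s a b t * f t

lemma preSS_eq_trip (G : CGame S M) (v : S → ℝ) (s : S) (x y : M → ℝ) :
    preSS G v s x y = trip G s x y v := by
  unfold preSS trip
  refine Finset.sum_congr rfl fun a _ => Finset.sum_congr rfl fun b _ =>
    Finset.sum_congr rfl fun t _ => by ring

lemma trip_mono {G : CGame S M} (hG : G.IsGame) {s : S} {x y : M → ℝ}
    (hx : ∀ a, 0 ≤ x a) (hy : ∀ b, 0 ≤ y b) {f g : S → ℝ} (h : ∀ t, f t ≤ g t) :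
    trip G s x y f ≤ trip G s x y g := by
  refine Finset.sum_le_sum fun a _ => Finset.sum_le_sum fun b _ =>
    Finset.sum_le_sum fun t _ => ?_
  have hδ := hG.2.2.1 s a b t
  have h1 := hx a; have h2 := hy b
  exact mul_le_mul_of_nonneg_left (h t) (by positivity)

lemma trip_const {G : CGame S M} (hG : G.IsGame) {s : S} {A B : Finset M} {x y : M → ℝ}
    (hx : IsDistOn A x) (hy : IsDistOn B y) (c : ℝ) :
    trip G s x y (fun _ => c) = c := by
  unfold trip
  have h1 : ∀ a b, ∑ t, x a * y b * G.δ s a b t * c = x a * y b * c := by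
    intro a b
    calc ∑ t, x a * y b * G.δ s a b t * c
        = (x a * y b * c) * ∑ t, G.δ s a b t := by
          rw [Finset.mul_sum]
          exact Finset.sum_congr rfl fun t _ => by ring
      _ = x a * y b * c := by rw [hG.2.2.2 s a b, mul_one]
  calc ∑ a : M, ∑ b : M, ∑ t : S, x a * y b * G.δ s a b t * c
      = ∑ a : M, ∑ b : M, x a * y b * c := by
        exact Finset.sum_congr rfl fun a _ => Finset.sum_congr rfl fun b _ => h1 a b
    _ = ∑ a : M, (x a * ((∑ b, y b) * c)) := by
        refine Finset.sum_congr rfl fun a _ => ?_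
        rw [Finset.sum_mul, Finset.mul_sum]
        exact Finset.sum_congr rfl fun b _ => by ring
    _ = (∑ a, x a) * ((∑ b, y b) * c) := by rw [← Finset.sum_mul]
    _ = c := by rw [hx.2.2, hy.2.2, one_mul, one_mul]

lemma trip_nonneg {G : CGame S M} (hG : G.IsGame) {s : S} {x y : M → ℝ}
    (hx : ∀ a, 0 ≤ x a) (hy : ∀ b, 0 ≤ y b) {f : S → ℝ} (hf : ∀ t, 0 ≤ f t) :
    0 ≤ trip G s x y f := by
  refine Finset.sum_nonneg fun a _ => Finset.sum_nonneg fun b _ =>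
    Finset.sum_nonneg fun t _ => ?_
  have hδ := hG.2.2.1 s a b t
  have h1 := hx a; have h2 := hy b; have h3 := hf t
  positivity

lemma trip_le_const {G : CGame S M} (hG : G.IsGame) {s : S} {A B : Finset M} {x y : M → ℝ}
    (hx : IsDistOn A x) (hy : IsDistOn B y) {f : S → ℝ} {c : ℝ} (hf : ∀ t, f t ≤ c) :
    trip G s x y f ≤ c :=
  le_of_le_of_eq (trip_mono hG hx.1 hy.1 hf) (trip_const hG hx hy c)

lemma const_le_trip {G : CGame S M} (hG : G.IsGame) {s : S} {A B : Finset M} {x y : M → ℝ}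
    (hx : IsDistOn A x) (hy : IsDistOn B y) {f : S → ℝ} {c : ℝ} (hf : ∀ t, c ≤ f t) :
    c ≤ trip G s x y f :=
  le_of_eq_of_le (trip_const hG hx hy c).symm (trip_mono hG hx.1 hy.1 hf)

lemma trip_add {G : CGame S M} {s : S} {x y : M → ℝ} (f g : S → ℝ) :
    trip G s x y (fun t => f t + g t) = trip G s x y f + trip G s x y g := by
  unfold trip
  simp_rw [mul_add, Finset.sum_add_distrib]

lemma trip_congr {G : CGame S M} {s : S} {x y : M → ℝ} {f g : S → ℝ} (h : ∀ t, f t = g t) :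
    trip G s x y f = trip G s x y g := by
  have : f = g := funext h
  rw [this]

/-! ### Bounds for `reachW` and `safeW` -/

variable {G : CGame S M} {σ₁ σ₂ : List S → S → M → ℝ} {T F : Set S}

lemma reachW_succ (n : ℕ) (w : List S) (s : S) :
    reachW G σ₁ σ₂ T (n+1) w s =
      if s ∈ T then 1
      else trip G s (σ₁ w s) (σ₂ w s) (fun t => reachW G σ₁ σ₂ T n (w ++ [s]) t) := by
  rw [reachW]; rfl

lemma safeW_succ (n : ℕ) (w : List S) (s : S) :
    safeW G σ₁ σ₂ F (n+1) w s =
      if s ∈ F then trip G s (σ₁ w s) (σ₂ w s) (fun t => safeW G σ₁ σ₂ F n (w ++ [s]) t)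
      else 0 := by
  rw [safeW]; rfl

lemma reachW_nonneg (hG : G.IsGame) (h1 : IsStrat1 G σ₁) (h2 : IsStrat2 G σ₂) :
    ∀ n w s, 0 ≤ reachW G σ₁ σ₂ T n w s := by
  intro n
  induction n with
  | zero => intro w s; rw [reachW]; split <;> norm_num
  | succ n ih =>
      intro w s; rw [reachW_succ]; split
      · norm_num
      · exact trip_nonneg hG (h1 w s).1 (h2 w s).1 fun t => ih _ t

lemma reachW_le_one (hG : G.IsGame) (h1 : IsStrat1 G σ₁) (h2 : IsStrat2 G σ₂) :
    ∀ n w s, reachW G σ₁ σ₂ T n w s ≤ 1 := by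
  intro n
  induction n with
  | zero => intro w s; rw [reachW]; split <;> norm_num
  | succ n ih =>
      intro w s; rw [reachW_succ]; split
      · norm_num
      · exact trip_le_const hG (h1 w s) (h2 w s) fun t => ih _ t

lemma reachW_mono (hG : G.IsGame) (h1 : IsStrat1 G σ₁) (h2 : IsStrat2 G σ₂) :
    ∀ n w s, reachW G σ₁ σ₂ T n w s ≤ reachW G σ₁ σ₂ T (n+1) w s := by
  intro n
  induction n with
  | zero =>
      intro w s; rw [reachW_succ, reachW]; split
      · norm_num
      · exact trip_nonneg hG (h1 w s).1 (h2 w s).1 fun t =>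
          reachW_nonneg hG h1 h2 _ _ t
  | succ n ih =>
      intro w s; rw [reachW_succ, reachW_succ]; split
      · norm_num
      · exact trip_mono hG (h1 w s).1 (h2 w s).1 fun t => ih _ t

lemma safeW_nonneg (hG : G.IsGame) (h1 : IsStrat1 G σ₁) (h2 : IsStrat2 G σ₂) :
    ∀ n w s, 0 ≤ safeW G σ₁ σ₂ F n w s := by
  intro n
  induction n with
  | zero => intro w s; rw [safeW]; split <;> norm_num
  | succ n ih =>
      intro w s; rw [safeW_succ]; split
      · exact trip_nonneg hG (h1 w s).1 (h2 w s).1 fun t => ih _ t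
      · norm_num

lemma safeW_le_one (hG : G.IsGame) (h1 : IsStrat1 G σ₁) (h2 : IsStrat2 G σ₂) :
    ∀ n w s, safeW G σ₁ σ₂ F n w s ≤ 1 := by
  intro n
  induction n with
  | zero => intro w s; rw [safeW]; split <;> norm_num
  | succ n ih =>
      intro w s; rw [safeW_succ]; split
      · exact trip_le_const hG (h1 w s) (h2 w s) fun t => ih _ t
      · norm_num

lemma safeW_anti (hG : G.IsGame) (h1 : IsStrat1 G σ₁) (h2 : IsStrat2 G σ₂) :
    ∀ n w s, safeW G σ₁ σ₂ F (n+1) w s ≤ safeW G σ₁ σ₂ F n w s := by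
  intro n
  induction n with
  | zero =>
      intro w s; rw [safeW_succ, safeW]; split
      · exact trip_le_const hG (h1 w s) (h2 w s) fun t => safeW_le_one hG h1 h2 _ _ t
      · norm_num
  | succ n ih =>
      intro w s; rw [safeW_succ, safeW_succ]; split
      · exact trip_mono hG (h1 w s).1 (h2 w s).1 fun t => ih _ t
      · norm_num

lemma safeW_anti_le (hG : G.IsGame) (h1 : IsStrat1 G σ₁) (h2 : IsStrat2 G σ₂)
    {m n : ℕ} (hmn : m ≤ n) (w : List S) (s : S) :
    safeW G σ₁ σ₂ F n w s ≤ safeW G σ₁ σ₂ F m w s := by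
  induction n with
  | zero => cases Nat.le_zero.1 hmn; exact le_rfl
  | succ n ih =>
      rcases Nat.lt_or_ge m (n+1) with h | h
      · exact le_trans (safeW_anti hG h1 h2 n w s) (ih (Nat.lt_succ_iff.1 h))
      · cases le_antisymm hmn h; exact le_rfl

lemma safeW_mono_set (hG : G.IsGame) (h1 : IsStrat1 G σ₁) (h2 : IsStrat2 G σ₂)
    {F' : Set S} (hFF : F ⊆ F') :
    ∀ n w s, safeW G σ₁ σ₂ F n w s ≤ safeW G σ₁ σ₂ F' n w s := by
  intro n
  induction n with
  | zero =>
      intro w s; rw [safeW, safeW]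
      by_cases hs : s ∈ F
      · simp [hs, hFF hs]
      · simp [hs]; split <;> norm_num
  | succ n ih =>
      intro w s; rw [safeW_succ, safeW_succ]
      by_cases hs : s ∈ F
      · simp only [hs, if_true, hFF hs]
        exact trip_mono hG (h1 w s).1 (h2 w s).1 fun t => ih _ t
      · simp only [hs, if_false]; split
        · exact trip_nonneg hG (h1 w s).1 (h2 w s).1 fun t => safeW_nonneg hG h1 h2 _ _ t
        · exact le_rfl

lemma reachW_add_safeW (hG : G.IsGame) (h1 : IsStrat1 G σ₁) (h2 : IsStrat2 G σ₂) (U : Set S) :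
    ∀ n w s, reachW G σ₁ σ₂ U n w s + safeW G σ₁ σ₂ Uᶜ n w s = 1 := by
  intro n
  induction n with
  | zero =>
      intro w s; rw [reachW, safeW]
      by_cases hs : s ∈ U
      · simp [hs]
      · simp [hs, Set.mem_compl_iff]
  | succ n ih =>
      intro w s; rw [reachW_succ, safeW_succ]
      by_cases hs : s ∈ U
      · simp [hs, Set.mem_compl_iff]
      · simp only [hs, if_false, Set.mem_compl_iff, not_false_iff, if_true]
        rw [← trip_add]
        rw [trip_congr (fun t => ih (w ++ [s]) t)]
        exact trip_const hG (h1 w s) (h2 w s) 1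

/-! ### Facts about `prReach` and values -/

lemma reachW_le_prReach (hG : G.IsGame) (h1 : IsStrat1 G σ₁) (h2 : IsStrat2 G σ₂)
    (n : ℕ) (s : S) : reachW G σ₁ σ₂ T n [] s ≤ prReach G σ₁ σ₂ T s :=
  le_ciSup (bddAbove_range_of_le (fun n => reachW_le_one hG h1 h2 n [] s)) n

lemma prReach_le_one (hG : G.IsGame) (h1 : IsStrat1 G σ₁) (h2 : IsStrat2 G σ₂) (s : S) :
    prReach G σ₁ σ₂ T s ≤ 1 :=
  ciSup_le fun n => reachW_le_one hG h1 h2 n [] s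

lemma prReach_nonneg (hG : G.IsGame) (h1 : IsStrat1 G σ₁) (h2 : IsStrat2 G σ₂) (s : S) :
    0 ≤ prReach G σ₁ σ₂ T s :=
  le_trans (reachW_nonneg hG h1 h2 0 [] s) (reachW_le_prReach hG h1 h2 0 s)

lemma valReachUnder_le_prReach (hG : G.IsGame) (h1 : IsStrat1 G σ₁)
    (h2 : IsStrat2 G σ₂) (s : S) :
    valReachUnder G σ₁ T s ≤ prReach G σ₁ σ₂ T s :=
  ciInf_le (f := fun σ : {σ // IsStrat2 G σ} => prReach G σ₁ σ.1 T s)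
    (bddBelow_range_of_le fun σ => prReach_nonneg hG h1 σ.2 s) ⟨σ₂, h2⟩

lemma valReachUnder_nonneg (hG : G.IsGame) (h1 : IsStrat1 G σ₁) (s : S) :
    0 ≤ valReachUnder G σ₁ T s :=
  have : Nonempty {σ // IsStrat2 G σ} := strat2_nonempty hG
  le_ciInf fun σ => prReach_nonneg hG h1 σ.2 s

lemma valReachUnder_le_one (hG : G.IsGame) (h1 : IsStrat1 G σ₁) (s : S) :
    valReachUnder G σ₁ T s ≤ 1 :=
  le_trans (valReachUnder_le_prReach hG h1 (fun _ s => unif2_isSel2 hG s) s)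
    (prReach_le_one hG h1 (fun _ s => unif2_isSel2 hG s) s)

lemma valReachUnder_of_mem (hG : G.IsGame) (h1 : IsStrat1 G σ₁) {s : S} (hs : s ∈ T) :
    valReachUnder G σ₁ T s = 1 := by
  have : Nonempty {σ // IsStrat2 G σ} := strat2_nonempty hG
  refine le_antisymm (valReachUnder_le_one hG h1 s) (le_ciInf fun σ => ?_)
  have h0 : reachW G σ₁ σ.1 T 0 [] s = 1 := by rw [reachW]; simp [hs]
  calc (1:ℝ) = reachW G σ₁ σ.1 T 0 [] s := h0.symm
    _ ≤ prReach G σ₁ σ.1 T s := reachW_le_prReach hG h1 σ.2 0 s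

lemma valReachUnder_eq_zero_of_W2 (hG : G.IsGame) (h1 : IsStrat1 G σ₁) {s : S}
    (hs : s ∈ W2 G T) : valReachUnder G σ₁ T s = 0 := by
  refine le_antisymm ?_ (valReachUnder_nonneg hG h1 s)
  have hle : valReachUnder G σ₁ T s ≤ valReach G T s := by
    refine le_ciSup (f := fun σ : {σ // IsStrat1 G σ} => valReachUnder G σ.1 T s)
      (bddAbove_range_of_le fun σ => valReachUnder_le_one hG σ.2 s) ⟨σ₁, h1⟩
  exact le_of_le_of_eq hle hs

/-! ### Absorbing states -/

lemma delta_absorbing (hG : G.IsGame) {s : S} (habs : Absorbing G s) (a b : M)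
    {t : S} (ht : t ≠ s) : G.δ s a b t = 0 := by
  have hsum := hG.2.2.2 s a b
  rw [← Finset.add_sum_erase Finset.univ _ (Finset.mem_univ s), habs a b] at hsum
  have h0 : ∑ t ∈ Finset.univ.erase s, G.δ s a b t = 0 := by linarith
  have h1 := (Finset.sum_eq_zero_iff_of_nonneg (fun t _ => hG.2.2.1 s a b t)).1 h0
  exact h1 t (Finset.mem_erase.2 ⟨ht, Finset.mem_univ t⟩)

lemma trip_absorbing (hG : G.IsGame) {s : S} (habs : Absorbing G s) {A B : Finset M}
    {x y : M → ℝ} (hx : IsDistOn A x) (hy : IsDistOn B y) (f : S → ℝ) :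
    trip G s x y f = f s := by
  unfold trip
  have h1 : ∀ a b, ∑ t, x a * y b * G.δ s a b t * f t = x a * y b * f s := by
    intro a b
    rw [Finset.sum_eq_single s]
    · rw [habs a b]; ring
    · intro t _ ht; rw [delta_absorbing hG habs a b ht]; ring
    · intro h; exact absurd (Finset.mem_univ s) h
  calc ∑ a : M, ∑ b : M, ∑ t : S, x a * y b * G.δ s a b t * f t
      = ∑ a : M, ∑ b : M, x a * y b * f s :=
        Finset.sum_congr rfl fun a _ => Finset.sum_congr rfl fun b _ => h1 a b
    _ = ∑ a : M, (x a * ((∑ b, y b) * f s)) := by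
        refine Finset.sum_congr rfl fun a _ => ?_
        rw [Finset.sum_mul, Finset.mul_sum]
        exact Finset.sum_congr rfl fun b _ => by ring
    _ = (∑ a, x a) * ((∑ b, y b) * f s) := by rw [← Finset.sum_mul]
    _ = f s := by rw [hx.2.2, hy.2.2, one_mul, one_mul]

lemma preSS_absorbing (hG : G.IsGame) {s : S} (habs : Absorbing G s) {A B : Finset M}
    {x y : M → ℝ} (hx : IsDistOn A x) (hy : IsDistOn B y) (v : S → ℝ) :
    preSS G v s x y = v s := by
  rw [preSS_eq_trip]; exact trip_absorbing hG habs hx hy v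

/-! ### `pre1Sel` and `pre1` facts -/

lemma preSS_nonneg (hG : G.IsGame) {v : S → ℝ} (h0 : ∀ t, 0 ≤ v t) {s : S}
    {x y : M → ℝ} (hx : ∀ a, 0 ≤ x a) (hy : ∀ b, 0 ≤ y b) : 0 ≤ preSS G v s x y := by
  rw [preSS_eq_trip]; exact trip_nonneg hG hx hy h0

lemma pre1Sel_le_preSS (hG : G.IsGame) {v : S → ℝ} (h0 : ∀ t, 0 ≤ v t) {s : S}
    {x : M → ℝ} (hx : ∀ a, 0 ≤ x a) {y : M → ℝ} (hy : IsDistOn (G.Γ₂ s) y) :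
    pre1Sel G v s x ≤ preSS G v s x y :=
  ciInf_le (f := fun y : {y : M → ℝ // IsDistOn (G.Γ₂ s) y} => preSS G v s x y.1)
    (bddBelow_range_of_le fun y => preSS_nonneg hG h0 hx y.2.1) ⟨y, hy⟩

lemma le_pre1Sel (hG : G.IsGame) {v : S → ℝ} {s : S} {x : M → ℝ} {c : ℝ}
    (h : ∀ y : M → ℝ, IsDistOn (G.Γ₂ s) y → c ≤ preSS G v s x y) :
    c ≤ pre1Sel G v s x :=
  have : Nonempty {y : M → ℝ // IsDistOn (G.Γ₂ s) y} := dist2_nonempty hG s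
  le_ciInf fun y => h y.1 y.2

lemma pre1Sel_nonneg (hG : G.IsGame) {v : S → ℝ} (h0 : ∀ t, 0 ≤ v t) {s : S}
    {x : M → ℝ} (hx : ∀ a, 0 ≤ x a) : 0 ≤ pre1Sel G v s x :=
  le_pre1Sel hG fun y hy => preSS_nonneg hG h0 hx hy.1

lemma pre1Sel_le_one (hG : G.IsGame) {v : S → ℝ} (h0 : ∀ t, 0 ≤ v t)
    (h1 : ∀ t, v t ≤ 1) {s : S} {A : Finset M} {x : M → ℝ} (hx : IsDistOn A x) :
    pre1Sel G v s x ≤ 1 := by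
  refine le_trans (pre1Sel_le_preSS hG h0 hx.1 (unif2_isSel2 hG s)) ?_
  rw [preSS_eq_trip]
  exact trip_le_const hG hx (unif2_isSel2 hG s) h1

lemma pre1Sel_mono (hG : G.IsGame) {v w : S → ℝ} (h0 : ∀ t, 0 ≤ v t)
    (hvw : ∀ t, v t ≤ w t) {s : S} {x : M → ℝ} (hx : ∀ a, 0 ≤ x a) :
    pre1Sel G v s x ≤ pre1Sel G w s x := by
  refine ciInf_mono (bddBelow_range_of_le fun y => preSS_nonneg hG h0 hx y.2.1) fun y => ?_
  rw [preSS_eq_trip, preSS_eq_trip]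
  exact trip_mono hG hx y.2.1 hvw

lemma pre1Sel_le_pre1 (hG : G.IsGame) {v : S → ℝ} (h0 : ∀ t, 0 ≤ v t)
    (h1 : ∀ t, v t ≤ 1) {s : S} {x : M → ℝ} (hx : IsDistOn (G.Γ₁ s) x) :
    pre1Sel G v s x ≤ pre1 G v s :=
  le_ciSup (f := fun x : {x : M → ℝ // IsDistOn (G.Γ₁ s) x} => pre1Sel G v s x.1)
    (bddAbove_range_of_le fun x => pre1Sel_le_one hG h0 h1 x.2) ⟨x, hx⟩

lemma pre1_le (hG : G.IsGame) {v : S → ℝ} {s : S} {c : ℝ}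
    (h : ∀ x : M → ℝ, IsDistOn (G.Γ₁ s) x → pre1Sel G v s x ≤ c) :
    pre1 G v s ≤ c :=
  have : Nonempty {x : M → ℝ // IsDistOn (G.Γ₁ s) x} := dist1_nonempty hG s
  ciSup_le fun x => h x.1 x.2

lemma pre1_nonneg (hG : G.IsGame) {v : S → ℝ} (h0 : ∀ t, 0 ≤ v t) (h1 : ∀ t, v t ≤ 1)
    (s : S) : 0 ≤ pre1 G v s :=
  le_trans (pre1Sel_nonneg hG h0 (uniformSel_isSel1 hG s).1)
    (pre1Sel_le_pre1 hG h0 h1 (uniformSel_isSel1 hG s))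

lemma pre1_le_one (hG : G.IsGame) {v : S → ℝ} (h0 : ∀ t, 0 ≤ v t) (h1 : ∀ t, v t ≤ 1)
    (s : S) : pre1 G v s ≤ 1 :=
  pre1_le hG fun x hx => pre1Sel_le_one hG h0 h1 hx

lemma pre1Sel_absorbing (hG : G.IsGame) {s : S} (habs : Absorbing G s) {A : Finset M}
    {x : M → ℝ} (hx : IsDistOn A x) (v : S → ℝ) : pre1Sel G v s x = v s := by
  have hne : Nonempty {y : M → ℝ // IsDistOn (G.Γ₂ s) y} := dist2_nonempty hG s
  have h : (fun y : {y : M → ℝ // IsDistOn (G.Γ₂ s) y} => preSS G v s x y.1)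
      = fun _ => v s := funext fun y => preSS_absorbing hG habs hx y.2 v
  unfold pre1Sel
  rw [h]
  exact ciInf_const

lemma pre1_absorbing (hG : G.IsGame) {s : S} (habs : Absorbing G s) (v : S → ℝ) :
    pre1 G v s = v s := by
  have hne : Nonempty {x : M → ℝ // IsDistOn (G.Γ₁ s) x} := dist1_nonempty hG s
  have h : (fun x : {x : M → ℝ // IsDistOn (G.Γ₁ s) x} => pre1Sel G v s x.1)
      = fun _ => v s := funext fun x => pre1Sel_absorbing hG habs x.2 v
  unfold pre1
  rw [h]
  exact ciSup_const

/-! ### The value under a memoryless strategy is a sub-fixpoint -/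

/-- Strategy playing `y` in the first round (at state `s`), `σC t` afterwards,
where `t` is the state after the first round. -/
noncomputable def patch (y : M → ℝ) (s : S) (u : S → M → ℝ)
    (σC : S → List S → S → M → ℝ) : List S → S → M → ℝ :=
  fun w s' =>
    if w = [] then (if s' = s then y else u s') else σC (w.tail.headD s') w.tail s'

lemma patch_nil (y : M → ℝ) (s : S) (u : S → M → ℝ) (σC : S → List S → S → M → ℝ)
    (s' : S) : patch y s u σC [] s' = if s' = s then y else u s' := by simp [patch]

lemma patch_cons (y : M → ℝ) (s : S) (u : S → M → ℝ) (σC : S → List S → S → M → ℝ)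
    (c : S) (rest : List S) (s' : S) :
    patch y s u σC (c :: rest) s' = σC (rest.headD s') rest s' := by simp [patch]

lemma patch_isStrat2 (hG : G.IsGame) {s : S} {y : M → ℝ} (hy : IsDistOn (G.Γ₂ s) y)
    {σC : S → List S → S → M → ℝ} (hσC : ∀ t, IsStrat2 G (σC t)) :
    IsStrat2 G (patch y s (unif2 G) σC) := by
  intro w s'
  by_cases hw : w = []
  · subst hw
    rw [patch_nil]
    by_cases hss : s' = s
    · rw [if_pos hss, hss]; exact hy
    · rw [if_neg hss]; exact unif2_isSel2 hG s'
  · obtain ⟨c, rest, rfl⟩ := List.exists_cons_of_ne_nil hw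
    rw [patch_cons]; exact hσC _ rest s'

lemma reachW_patch {γ : S → M → ℝ} {y : M → ℝ} {s : S}
    {σC : S → List S → S → M → ℝ} :
    ∀ (n : ℕ) (w : List S) (t : S),
      reachW G (ml γ) (patch y s (unif2 G) σC) T n (s :: w) t
        = reachW G (ml γ) (σC (w.headD t)) T n w t := by
  intro n
  induction n with
  | zero => intro w t; rw [reachW, reachW]
  | succ n ih =>
      intro w t
      rw [reachW_succ, reachW_succ]
      by_cases ht : t ∈ T
      · simp [ht]
      · simp only [ht, if_false, ml]
        rw [patch_cons]
        refine trip_congr fun r => ?_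
        have h2 : (w ++ [t]).headD r = w.headD t := by cases w <;> simp
        have h1 := ih (w ++ [t]) r
        rw [show (s :: w) ++ [t] = s :: (w ++ [t]) from rfl] at *
        rw [h1, h2]

lemma valReachUnder_le_preSS (hG : G.IsGame) {γ : S → M → ℝ} (hγ : IsSel1 G γ)
    {s : S} (hs : s ∉ T) {y : M → ℝ} (hy : IsDistOn (G.Γ₂ s) y) :
    valReachUnder G (ml γ) T s
      ≤ preSS G (valReachUnder G (ml γ) T) s (γ s) y := by
  have h1 : IsStrat1 G (ml γ) := fun _ s' => hγ s'
  have hne : Nonempty {σ // IsStrat2 G σ} := strat2_nonempty hG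
  have h0 : ∀ t, 0 ≤ valReachUnder G (ml γ) T t :=
    fun t => valReachUnder_nonneg hG h1 t
  refine le_of_forall_pos_le_add fun ε hε => ?_
  have hch : ∀ t : S, ∃ σ : {σ // IsStrat2 G σ},
      prReach G (ml γ) σ.1 T t < valReachUnder G (ml γ) T t + ε := by
    intro t
    refine exists_lt_of_ciInf_lt
      (f := fun σ : {σ // IsStrat2 G σ} => prReach G (ml γ) σ.1 T t) ?_
    exact lt_add_of_pos_right _ hε
  choose σC hσC using hch
  have hstrat : IsStrat2 G (patch y s (unif2 G) (fun t => (σC t).1)) :=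
    patch_isStrat2 hG hy (fun t => (σC t).2)
  have hps : 0 ≤ preSS G (valReachUnder G (ml γ) T) s (γ s) y :=
    preSS_nonneg hG h0 (hγ s).1 hy.1
  have key : ∀ n, reachW G (ml γ) (patch y s (unif2 G) (fun t => (σC t).1)) T n [] s
      ≤ preSS G (valReachUnder G (ml γ) T) s (γ s) y + ε := by
    intro n
    cases n with
    | zero =>
        rw [reachW, if_neg hs]
        linarith
    | succ n =>
        rw [reachW_succ, if_neg hs]
        simp only [ml]
        rw [patch_nil, if_pos rfl]
        calc trip G s (γ s) y
              (fun t => reachW G (ml γ) (patch y s (unif2 G) (fun t => (σC t).1)) T n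
                ([] ++ [s]) t)
            ≤ trip G s (γ s) y (fun t => valReachUnder G (ml γ) T t + ε) := by
              refine trip_mono hG (hγ s).1 hy.1 fun t => ?_
              have ht1 : reachW G (ml γ) (patch y s (unif2 G) (fun t => (σC t).1)) T n
                  ([] ++ [s]) t = reachW G (ml γ) ((σC t).1) T n [] t :=
                reachW_patch n [] t
              rw [ht1]
              exact le_trans (reachW_le_prReach hG h1 (σC t).2 n t) (le_of_lt (hσC t))
          _ = preSS G (valReachUnder G (ml γ) T) s (γ s) y + ε := by
              rw [trip_add (valReachUnder G (ml γ) T) (fun _ => ε),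
                trip_const hG (hγ s) hy ε, preSS_eq_trip]
  calc valReachUnder G (ml γ) T s
      ≤ prReach G (ml γ) (patch y s (unif2 G) (fun t => (σC t).1)) T s :=
        valReachUnder_le_prReach hG h1 hstrat s
    _ ≤ preSS G (valReachUnder G (ml γ) T) s (γ s) y + ε := ciSup_le key

lemma valReachUnder_le_pre1Sel (hG : G.IsGame) {γ : S → M → ℝ} (hγ : IsSel1 G γ)
    {s : S} (habsT : s ∈ T → Absorbing G s) :
    valReachUnder G (ml γ) T s ≤ pre1Sel G (valReachUnder G (ml γ) T) s (γ s) := by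
  refine le_pre1Sel hG fun y hy => ?_
  by_cases hsT : s ∈ T
  · rw [preSS_absorbing hG (habsT hsT) (hγ s) hy]
  · exact valReachUnder_le_preSS hG hγ hsT hy

/-! ### Shifting strategies -/

def shiftStrat (σ : List S → S → M → ℝ) (w0 : List S) : List S → S → M → ℝ :=
  fun w s => σ (w0 ++ w) s

lemma shiftStrat_isStrat2 {σ : List S → S → M → ℝ} (h : IsStrat2 G σ) (w0 : List S) :
    IsStrat2 G (shiftStrat σ w0) := fun w s => h (w0 ++ w) s

lemma safeW_shift_gen {σ₁ σ₂ : List S → S → M → ℝ} :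
    ∀ (n : ℕ) (w0 w : List S) (s : S),
      safeW G σ₁ σ₂ F n (w0 ++ w) s
        = safeW G (shiftStrat σ₁ w0) (shiftStrat σ₂ w0) F n w s := by
  intro n
  induction n with
  | zero => intro w0 w s; rw [safeW, safeW]
  | succ n ih =>
      intro w0 w s
      rw [safeW_succ, safeW_succ]
      by_cases hs : s ∈ F
      · simp only [hs, if_true, shiftStrat]
        refine trip_congr fun t => ?_
        rw [List.append_assoc]
        exact ih w0 (w ++ [s]) t
      · simp [hs]

lemma safeW_shift {σ₁ σ₂ : List S → S → M → ℝ} (n : ℕ) (w0 : List S) (s : S) :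
    safeW G σ₁ σ₂ F n w0 s
      = safeW G (shiftStrat σ₁ w0) (shiftStrat σ₂ w0) F n [] s := by
  have := safeW_shift_gen (G := G) (F := F) (σ₁ := σ₁) (σ₂ := σ₂) n w0 [] s
  rwa [List.append_nil] at this

/-! ### Compactness of the space of player-2 strategies -/

lemma isCompact_dists (A : Finset M) : IsCompact {y : M → ℝ | IsDistOn A y} := by
  have hsub : {y : M → ℝ | IsDistOn A y}
      ⊆ Set.pi Set.univ (fun _ : M => Set.Icc (0:ℝ) 1) := by
    intro y hy a _
    refine ⟨hy.1 a, ?_⟩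
    have h := Finset.single_le_sum (fun b _ => hy.1 b) (Finset.mem_univ a)
    exact le_trans h (le_of_eq hy.2.2)
  have hclosed : IsClosed {y : M → ℝ | IsDistOn A y} := by
    have hset : {y : M → ℝ | IsDistOn A y} =
        (⋂ a : M, {y : M → ℝ | 0 ≤ y a}) ∩
        ((⋂ a ∈ Finset.univ.filter (fun a => a ∉ A), {y : M → ℝ | y a = 0}) ∩
          {y : M → ℝ | (∑ a, y a) = 1}) := by
      ext y
      simp only [Set.mem_inter_iff, Set.mem_iInter, Set.mem_setOf_eq, Finset.mem_filter,
        Finset.mem_univ, true_and]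
      constructor
      · rintro ⟨hy1, hy2, hy3⟩
        exact ⟨hy1, fun a ha => by_contra fun h => ha (hy2 a h), hy3⟩
      · rintro ⟨hy1, hy2, hy3⟩
        exact ⟨hy1, fun a h => by_contra fun ha => h (hy2 a ha), hy3⟩
    rw [hset]
    refine IsClosed.inter (isClosed_iInter fun a =>
        isClosed_le continuous_const (continuous_apply a)) (IsClosed.inter ?_ ?_)
    · exact isClosed_biInter fun a _ => isClosed_eq (continuous_apply a) continuous_const
    · exact isClosed_eq (continuous_finset_sum _ fun a _ => continuous_apply a)
        continuous_const
  exact IsCompact.of_isClosed_subset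
    (isCompact_univ_pi fun _ => isCompact_Icc) hclosed hsub

lemma continuous_safeW {σ₁ : List S → S → M → ℝ} :
    ∀ (n : ℕ) (w : List S) (s : S),
      Continuous (fun σ : (List S × S) → M → ℝ =>
        safeW G σ₁ (fun w s => σ (w, s)) F n w s) := by
  intro n
  induction n with
  | zero =>
      intro w s
      simp only [safeW]
      exact continuous_const
  | succ n ih =>
      intro w s
      simp only [safeW_succ]
      by_cases hs : s ∈ F
      · simp only [hs, if_true]
        unfold trip
        refine continuous_finset_sum _ fun a _ => continuous_finset_sum _ fun b _ =>
          continuous_finset_sum _ fun t _ => ?_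
        have hb : Continuous (fun σ : (List S × S) → M → ℝ => σ (w, s) b) :=
          (continuous_apply b).comp (continuous_apply (w, s))
        exact ((continuous_const.mul hb).mul continuous_const).mul (ih (w ++ [s]) t)
      · simp only [hs, if_false]
        exact continuous_const

/-! ### Uniform safety bound for a proper memoryless strategy -/

lemma proper_safeW_lt (hG : G.IsGame) {σsel : S → M → ℝ} (hsel : IsSel1 G σsel)
    (hprop : Proper G T (ml σsel)) {σ₂ : List S → S → M → ℝ} (h2 : IsStrat2 G σ₂)
    (s : S) {c : ℝ} (hc : 0 < c) :
    ∃ n, safeW G (ml σsel) σ₂ ((T ∪ W2 G T)ᶜ) n [] s < c := by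
  have h1 : IsStrat1 G (ml σsel) := fun _ s' => hsel s'
  have hpr : prReach G (ml σsel) σ₂ (T ∪ W2 G T) s = 1 := hprop σ₂ h2 s
  have hlt : (1 : ℝ) - c < ⨆ n, reachW G (ml σsel) σ₂ (T ∪ W2 G T) n [] s := by
    rw [show (⨆ n, reachW G (ml σsel) σ₂ (T ∪ W2 G T) n [] s)
        = prReach G (ml σsel) σ₂ (T ∪ W2 G T) s from rfl, hpr]
    linarith
  obtain ⟨n, hn⟩ := exists_lt_of_lt_ciSup hlt
  refine ⟨n, ?_⟩
  have hcompl := reachW_add_safeW hG h1 h2 (T ∪ W2 G T) n [] s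
  linarith

lemma exists_uniform_safe (hG : G.IsGame) {σsel : S → M → ℝ} (hsel : IsSel1 G σsel)
    (hprop : Proper G T (ml σsel)) :
    ∃ N : ℕ, ∀ σ₂, IsStrat2 G σ₂ → ∀ (w : List S) (s : S),
      safeW G (ml σsel) σ₂ ((T ∪ W2 G T)ᶜ) N w s ≤ 1/2 := by
  have h1 : IsStrat1 G (ml σsel) := fun _ s' => hsel s'
  -- pointwise bound via compactness
  have hpoint : ∀ s : S, ∃ N : ℕ, ∀ σ₂, IsStrat2 G σ₂ →
      safeW G (ml σsel) σ₂ ((T ∪ W2 G T)ᶜ) N [] s ≤ 1/2 := by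
    intro s
    by_contra hcon
    push_neg at hcon
    choose σN hσN hgt using hcon
    set K : Set ((List S × S) → M → ℝ) :=
      Set.pi Set.univ (fun p : List S × S => {y : M → ℝ | IsDistOn (G.Γ₂ p.2) y}) with hK
    have hKcompact : IsCompact K := isCompact_univ_pi fun p => isCompact_dists _
    have hKclosed : IsClosed K :=
      isClosed_set_pi fun p _ => (isCompact_dists (G.Γ₂ p.2)).isClosed
    set C : ℕ → Set ((List S × S) → M → ℝ) := fun n =>
      K ∩ {σ | 1/2 ≤ safeW G (ml σsel) (fun w s' => σ (w, s')) ((T ∪ W2 G T)ᶜ) n [] s}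
      with hC
    have hCclosed : ∀ n, IsClosed (C n) := fun n =>
      hKclosed.inter (isClosed_le continuous_const (continuous_safeW n [] s))
    have hCsub : ∀ n, C (n+1) ⊆ C n := by
      intro n σ hσ
      have hval : IsStrat2 G (fun w s' => σ (w, s')) := fun w s' => hσ.1 (w, s') trivial
      exact ⟨hσ.1, le_trans hσ.2 (safeW_anti hG h1 hval n [] s)⟩
    have hCne : ∀ n, (C n).Nonempty := by
      intro n
      refine ⟨fun p => σN n p.1 p.2, ?_, ?_⟩
      · intro p _; exact hσN n p.1 p.2
      · exact le_of_lt (hgt n)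
    obtain ⟨σstar, hσstar⟩ :=
      IsCompact.nonempty_iInter_of_sequence_nonempty_isCompact_isClosed C hCsub hCne
        (hKcompact.inter_right
          (isClosed_le continuous_const (continuous_safeW 0 [] s))) hCclosed
    have hmem : ∀ n, σstar ∈ C n := fun n => Set.mem_iInter.1 hσstar n
    have hvalid : IsStrat2 G (fun w s' => σstar (w, s')) :=
      fun w s' => (hmem 0).1 (w, s') trivial
    obtain ⟨n, hn⟩ := proper_safeW_lt hG hsel hprop hvalid s (c := 1/2) (by norm_num)
    have := (hmem n).2
    simp only [Set.mem_setOf_eq] at this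
    linarith
  choose Ns hNs using hpoint
  refine ⟨Finset.univ.sup Ns, fun σ₂ h2 w s => ?_⟩
  have hshift := safeW_shift (G := G) (F := (T ∪ W2 G T)ᶜ) (σ₁ := ml σsel) (σ₂ := σ₂)
    (Finset.univ.sup Ns) w s
  have hmlshift : shiftStrat (ml σsel) w = ml σsel := rfl
  rw [hshift, hmlshift]
  have h2' : IsStrat2 G (shiftStrat σ₂ w) := shiftStrat_isStrat2 h2 w
  exact le_trans (safeW_anti_le hG h1 h2' (Finset.le_sup (Finset.mem_univ s)) [] s)
    (hNs s _ h2')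

/-! ### Counting machinery for properness -/

variable {I : Set S}

lemma trip_smul {s : S} {x y : M → ℝ} (c : ℝ) (f : S → ℝ) :
    trip G s x y (fun t => c * f t) = c * trip G s x y f := by
  unfold trip
  simp_rw [Finset.mul_sum]
  exact Finset.sum_congr rfl fun a _ => Finset.sum_congr rfl fun b _ =>
    Finset.sum_congr rfl fun t _ => by ring

lemma safeW_of_not_mem {s : S} (hs : s ∉ F) (n : ℕ) (w : List S) :
    safeW G σ₁ σ₂ F n w s = 0 := by
  cases n with
  | zero => rw [safeW, if_neg hs]
  | succ n => rw [safeW_succ, if_neg hs]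

lemma safeW_congr_sel {ξ ξ' : S → M → ℝ} (h : ∀ s' ∈ F, ξ s' = ξ' s') :
    ∀ n w s, safeW G (ml ξ) σ₂ F n w s = safeW G (ml ξ') σ₂ F n w s := by
  intro n
  induction n with
  | zero => intro w s; rw [safeW, safeW]
  | succ n ih =>
      intro w s
      by_cases hs : s ∈ F
      · simp only [safeW_succ, hs, if_true, ml]
        rw [h s hs]
        exact trip_congr fun t => ih (w ++ [s]) t
      · rw [safeW_of_not_mem hs, safeW_of_not_mem hs]

/-- Expected value of `v` after `n` rounds. -/
noncomputable def evF (G : CGame S M) (σ₁ σ₂ : List S → S → M → ℝ) (v : S → ℝ) :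
    ℕ → List S → S → ℝ
  | 0, _, s => v s
  | n + 1, w, s => trip G s (σ₁ w s) (σ₂ w s) (fun t => evF G σ₁ σ₂ v n (w ++ [s]) t)

/-- Expected number of visits to `I` during rounds `0..n`. -/
noncomputable def visitSum (G : CGame S M) (σ₁ σ₂ : List S → S → M → ℝ) (I : Set S) :
    ℕ → List S → S → ℝ
  | 0, _, s => if s ∈ I then 1 else 0
  | n + 1, w, s => (if s ∈ I then 1 else 0) +
      trip G s (σ₁ w s) (σ₂ w s) (fun t => visitSum G σ₁ σ₂ I n (w ++ [s]) t)

/-- Probability that rounds `0..n` contain at least `K` visits to `I`. -/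
noncomputable def cntGe (G : CGame S M) (σ₁ σ₂ : List S → S → M → ℝ) (I : Set S) :
    ℕ → ℕ → List S → S → ℝ
  | _, 0, _, _ => 1
  | 0, K + 1, _, s => if s ∈ I ∧ K = 0 then 1 else 0
  | n + 1, K + 1, w, s => trip G s (σ₁ w s) (σ₂ w s)
      (fun t => cntGe G σ₁ σ₂ I n (if s ∈ I then K else K + 1) (w ++ [s]) t)

/-- Probability of staying in `F` through round `n` with fewer than `K` visits to `I`. -/
noncomputable def safeLow (G : CGame S M) (σ₁ σ₂ : List S → S → M → ℝ) (F I : Set S) :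
    ℕ → ℕ → List S → S → ℝ
  | _, 0, _, _ => 0
  | 0, K + 1, _, s => if s ∈ F ∧ ¬(s ∈ I ∧ K = 0) then 1 else 0
  | n + 1, K + 1, w, s =>
      if s ∈ F then
        trip G s (σ₁ w s) (σ₂ w s)
          (fun t => safeLow G σ₁ σ₂ F I n (if s ∈ I then K else K + 1) (w ++ [s]) t)
      else 0

lemma visitSum_nonneg (hG : G.IsGame) (h1 : IsStrat1 G σ₁) (h2 : IsStrat2 G σ₂) :
    ∀ n w s, 0 ≤ visitSum G σ₁ σ₂ I n w s := by
  intro n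
  induction n with
  | zero => intro w s; rw [visitSum]; split <;> norm_num
  | succ n ih =>
      intro w s; rw [visitSum]
      have ht := trip_nonneg (s := s) (x := σ₁ w s) (y := σ₂ w s) hG
        (h1 w s).1 (h2 w s).1 (fun t => ih (w ++ [s]) t)
      split <;> linarith

lemma cntGe_nonneg (hG : G.IsGame) (h1 : IsStrat1 G σ₁) (h2 : IsStrat2 G σ₂) :
    ∀ n K w s, 0 ≤ cntGe G σ₁ σ₂ I n K w s := by
  intro n
  induction n with
  | zero =>
      intro K w s
      rcases K with _ | K
      · rw [cntGe]; norm_num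
      · rw [cntGe]; split <;> norm_num
  | succ n ih =>
      intro K w s
      rcases K with _ | K
      · rw [cntGe]; norm_num
      · rw [cntGe]
        exact trip_nonneg hG (h1 w s).1 (h2 w s).1 (fun t => ih _ _ t)

lemma cntGe_le_one (hG : G.IsGame) (h1 : IsStrat1 G σ₁) (h2 : IsStrat2 G σ₂) :
    ∀ n K w s, cntGe G σ₁ σ₂ I n K w s ≤ 1 := by
  intro n
  induction n with
  | zero =>
      intro K w s
      rcases K with _ | K
      · rw [cntGe]
      · rw [cntGe]; split <;> norm_num
  | succ n ih =>
      intro K w s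
      rcases K with _ | K
      · rw [cntGe]
      · rw [cntGe]
        exact trip_le_const hG (h1 w s) (h2 w s) (fun t => ih _ _ t)

lemma safeLow_nonneg (hG : G.IsGame) (h1 : IsStrat1 G σ₁) (h2 : IsStrat2 G σ₂) :
    ∀ n K w s, 0 ≤ safeLow G σ₁ σ₂ F I n K w s := by
  intro n
  induction n with
  | zero =>
      intro K w s
      rcases K with _ | K
      · rw [safeLow]
      · rw [safeLow]; split <;> norm_num
  | succ n ih =>
      intro K w s
      rcases K with _ | K
      · rw [safeLow]
      · rw [safeLow]; split
        · exact trip_nonneg hG (h1 w s).1 (h2 w s).1 (fun t => ih _ _ t)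
        · exact le_rfl

lemma safeLow_le_one (hG : G.IsGame) (h1 : IsStrat1 G σ₁) (h2 : IsStrat2 G σ₂) :
    ∀ n K w s, safeLow G σ₁ σ₂ F I n K w s ≤ 1 := by
  intro n
  induction n with
  | zero =>
      intro K w s
      rcases K with _ | K
      · rw [safeLow]; norm_num
      · rw [safeLow]; split <;> norm_num
  | succ n ih =>
      intro K w s
      rcases K with _ | K
      · rw [safeLow]; norm_num
      · rw [safeLow]; split
        · exact trip_le_const hG (h1 w s) (h2 w s) (fun t => ih _ _ t)
        · norm_num

lemma evF_le_one (hG : G.IsGame) (h1 : IsStrat1 G σ₁) (h2 : IsStrat2 G σ₂)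
    {v : S → ℝ} (hv1 : ∀ t, v t ≤ 1) :
    ∀ n w s, evF G σ₁ σ₂ v n w s ≤ 1 := by
  intro n
  induction n with
  | zero => intro w s; rw [evF]; exact hv1 s
  | succ n ih =>
      intro w s; rw [evF]
      exact trip_le_const hG (h1 w s) (h2 w s) (fun t => ih _ t)

lemma submartingale_visit (hG : G.IsGame) (h1 : IsStrat1 G σ₁) (h2 : IsStrat2 G σ₂)
    {v : S → ℝ} {ε : ℝ}
    (hstep : ∀ (w : List S) (s : S),
      v s + ε * (if s ∈ I then 1 else 0) ≤ trip G s (σ₁ w s) (σ₂ w s) v) :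
    ∀ n w s, v s + ε * visitSum G σ₁ σ₂ I n w s ≤ evF G σ₁ σ₂ v (n + 1) w s := by
  intro n
  induction n with
  | zero =>
      intro w s
      rw [visitSum, evF]
      have : trip G s (σ₁ w s) (σ₂ w s) (fun t => evF G σ₁ σ₂ v 0 (w ++ [s]) t)
          = trip G s (σ₁ w s) (σ₂ w s) v := trip_congr fun t => by rw [evF]
      rw [this]
      exact hstep w s
  | succ n ih =>
      intro w s
      rw [visitSum, evF]
      have hmono : trip G s (σ₁ w s) (σ₂ w s) (fun t => evF G σ₁ σ₂ v (n+1) (w ++ [s]) t)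
          ≥ trip G s (σ₁ w s) (σ₂ w s)
            (fun t => v t + ε * visitSum G σ₁ σ₂ I n (w ++ [s]) t) :=
        trip_mono hG (h1 w s).1 (h2 w s).1 fun t => ih (w ++ [s]) t
      have hsplit : trip G s (σ₁ w s) (σ₂ w s)
            (fun t => v t + ε * visitSum G σ₁ σ₂ I n (w ++ [s]) t)
          = trip G s (σ₁ w s) (σ₂ w s) v
            + ε * trip G s (σ₁ w s) (σ₂ w s)
                (fun t => visitSum G σ₁ σ₂ I n (w ++ [s]) t) := by
        rw [trip_add v (fun t => ε * visitSum G σ₁ σ₂ I n (w ++ [s]) t),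
          trip_smul ε (fun t => visitSum G σ₁ σ₂ I n (w ++ [s]) t)]
      have hst := hstep w s
      have := hmono
      rw [hsplit] at this
      have hgoal : v s + ε * ((if s ∈ I then 1 else 0)
          + trip G s (σ₁ w s) (σ₂ w s) (fun t => visitSum G σ₁ σ₂ I n (w ++ [s]) t))
          ≤ evF G σ₁ σ₂ v (n + 1 + 1) w s := by
        rw [evF]
        calc v s + ε * ((if s ∈ I then 1 else 0)
              + trip G s (σ₁ w s) (σ₂ w s) (fun t => visitSum G σ₁ σ₂ I n (w ++ [s]) t))
            = (v s + ε * (if s ∈ I then 1 else 0))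
              + ε * trip G s (σ₁ w s) (σ₂ w s)
                  (fun t => visitSum G σ₁ σ₂ I n (w ++ [s]) t) := by ring
          _ ≤ trip G s (σ₁ w s) (σ₂ w s) v
              + ε * trip G s (σ₁ w s) (σ₂ w s)
                  (fun t => visitSum G σ₁ σ₂ I n (w ++ [s]) t) := by linarith
          _ ≤ trip G s (σ₁ w s) (σ₂ w s)
                (fun t => evF G σ₁ σ₂ v (n+1) (w ++ [s]) t) := this
      exact hgoal

lemma visitSum_le_inv (hG : G.IsGame) (h1 : IsStrat1 G σ₁) (h2 : IsStrat2 G σ₂)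
    {v : S → ℝ} {ε : ℝ} (hε : 0 < ε) (hv0 : ∀ t, 0 ≤ v t) (hv1 : ∀ t, v t ≤ 1)
    (hstep : ∀ (w : List S) (s : S),
      v s + ε * (if s ∈ I then 1 else 0) ≤ trip G s (σ₁ w s) (σ₂ w s) v) :
    ∀ n w s, visitSum G σ₁ σ₂ I n w s ≤ 1 / ε := by
  intro n w s
  have h := submartingale_visit hG h1 h2 hstep n w s
  have h2' := evF_le_one hG h1 h2 hv1 (n+1) w s
  have h3 := hv0 s
  rw [le_div_iff₀ hε]
  nlinarith

lemma markov_cnt (hG : G.IsGame) (h1 : IsStrat1 G σ₁) (h2 : IsStrat2 G σ₂) :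
    ∀ (n : ℕ) (K : ℕ) (w : List S) (s : S), (K : ℝ) * cntGe G σ₁ σ₂ I n K w s ≤ visitSum G σ₁ σ₂ I n w s := by
  intro n
  induction n with
  | zero =>
      intro K w s
      rcases K with _ | K
      · simp only [Nat.cast_zero, zero_mul]
        exact visitSum_nonneg hG h1 h2 0 w s
      · rw [cntGe, visitSum]
        by_cases hsI : s ∈ I
        · rcases Nat.eq_zero_or_pos K with rfl | hK
          · norm_num [hsI]
          · have hc : ¬(s ∈ I ∧ K = 0) := fun h => (Nat.pos_iff_ne_zero.1 hK) h.2
            have hK' : ¬(K = 0) := Nat.pos_iff_ne_zero.1 hK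
            norm_num [hc, hsI, hK']
        · have hc : ¬(s ∈ I ∧ K = 0) := fun h => hsI h.1
          norm_num [hc, hsI]
  | succ n ih =>
      intro K w s
      rcases K with _ | K
      · simp only [Nat.cast_zero, zero_mul]
        exact visitSum_nonneg hG h1 h2 (n+1) w s
      · rw [cntGe, visitSum]
        by_cases hsI : s ∈ I
        · simp only [hsI, if_true]
          have key : ∀ t, ((K : ℝ) + 1) * cntGe G σ₁ σ₂ I n K (w ++ [s]) t
              ≤ visitSum G σ₁ σ₂ I n (w ++ [s]) t + 1 := by
            intro t
            have ha := ih K (w ++ [s]) t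
            have hb := cntGe_le_one (I := I) hG h1 h2 n K (w ++ [s]) t
            nlinarith [cntGe_nonneg (I := I) hG h1 h2 n K (w ++ [s]) t]
          have hsm : ((K : ℝ) + 1) * trip G s (σ₁ w s) (σ₂ w s)
                (fun t => cntGe G σ₁ σ₂ I n K (w ++ [s]) t)
              = trip G s (σ₁ w s) (σ₂ w s)
                (fun t => ((K : ℝ) + 1) * cntGe G σ₁ σ₂ I n K (w ++ [s]) t) :=
            (trip_smul _ _).symm
          have hmono : trip G s (σ₁ w s) (σ₂ w s)
                (fun t => ((K : ℝ) + 1) * cntGe G σ₁ σ₂ I n K (w ++ [s]) t)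
              ≤ trip G s (σ₁ w s) (σ₂ w s)
                (fun t => visitSum G σ₁ σ₂ I n (w ++ [s]) t + 1) :=
            trip_mono hG (h1 w s).1 (h2 w s).1 key
          have hadd : trip G s (σ₁ w s) (σ₂ w s)
                (fun t => visitSum G σ₁ σ₂ I n (w ++ [s]) t + 1)
              = trip G s (σ₁ w s) (σ₂ w s)
                  (fun t => visitSum G σ₁ σ₂ I n (w ++ [s]) t) + 1 := by
            rw [trip_add (fun t => visitSum G σ₁ σ₂ I n (w ++ [s]) t) (fun _ => 1),
              trip_const hG (h1 w s) (h2 w s) 1]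
          push_cast
          rw [hsm]
          linarith [hmono, hadd.le, hadd.ge]
        · simp only [hsI, if_false]
          have hsm : ((K : ℝ) + 1) * trip G s (σ₁ w s) (σ₂ w s)
                (fun t => cntGe G σ₁ σ₂ I n (K + 1) (w ++ [s]) t)
              = trip G s (σ₁ w s) (σ₂ w s)
                (fun t => ((K : ℝ) + 1) * cntGe G σ₁ σ₂ I n (K + 1) (w ++ [s]) t) :=
            (trip_smul _ _).symm
          have hmono : trip G s (σ₁ w s) (σ₂ w s)
                (fun t => ((K : ℝ) + 1) * cntGe G σ₁ σ₂ I n (K + 1) (w ++ [s]) t)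
              ≤ trip G s (σ₁ w s) (σ₂ w s)
                (fun t => visitSum G σ₁ σ₂ I n (w ++ [s]) t) := by
            refine trip_mono hG (h1 w s).1 (h2 w s).1 fun t => ?_
            have := ih (K + 1) (w ++ [s]) t
            push_cast at this
            linarith
          push_cast
          rw [hsm]
          linarith [hmono]

lemma safeW_le_cnt_add_low (hG : G.IsGame) (h1 : IsStrat1 G σ₁) (h2 : IsStrat2 G σ₂) :
    ∀ n K w s, safeW G σ₁ σ₂ F n w s
      ≤ cntGe G σ₁ σ₂ I n K w s + safeLow G σ₁ σ₂ F I n K w s := by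
  intro n
  induction n with
  | zero =>
      intro K w s
      rcases K with _ | K
      · rw [safeW, cntGe, safeLow]
        split <;> norm_num
      · rw [safeW, cntGe, safeLow]
        by_cases hsF : s ∈ F
        · by_cases hc : s ∈ I ∧ K = 0
          · simp [hsF, hc]
          · simp [hsF, hc]
        · have h0 : (0:ℝ) ≤ (if s ∈ I ∧ K = 0 then (1:ℝ) else 0) := by split <;> norm_num
          simp only [hsF, false_and, if_false]
          linarith
  | succ n ih =>
      intro K w s
      rcases K with _ | K
      · rw [safeLow, cntGe]
        have := safeW_le_one (F := F) hG h1 h2 (n+1) w s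
        linarith
      · rw [safeW_succ, cntGe, safeLow]
        by_cases hsF : s ∈ F
        · simp only [hsF, if_true]
          rw [← trip_add]
          exact trip_mono hG (h1 w s).1 (h2 w s).1 fun t => ih _ (w ++ [s]) t
        · simp only [hsF, if_false]
          have := cntGe_nonneg (I := I) hG h1 h2 (n+1) (K+1) w s
          rw [cntGe] at this
          linarith

/-! ### Geometric decay of safety, and smallness of `safeLow` -/

lemma safeW_add_bound (hG : G.IsGame) (h1 : IsStrat1 G σ₁) (h2 : IsStrat2 G σ₂)
    {β : ℝ} (hβ : 0 ≤ β) {b : ℕ} (hb : ∀ w s, safeW G σ₁ σ₂ F b w s ≤ β) :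
    ∀ a w s, safeW G σ₁ σ₂ F (a + b) w s ≤ β * safeW G σ₁ σ₂ F a w s := by
  intro a
  induction a with
  | zero =>
      intro w s
      rw [Nat.zero_add]
      by_cases hs : s ∈ F
      · rw [show safeW G σ₁ σ₂ F 0 w s = 1 from by rw [safeW, if_pos hs], mul_one]
        exact hb w s
      · rw [safeW_of_not_mem hs, safeW_of_not_mem hs, mul_zero]
  | succ a ih =>
      intro w s
      by_cases hs : s ∈ F
      · have hidx : a + 1 + b = (a + b) + 1 := by omega
        rw [hidx, safeW_succ, if_pos hs, safeW_succ, if_pos hs]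
        calc trip G s (σ₁ w s) (σ₂ w s) (fun t => safeW G σ₁ σ₂ F (a + b) (w ++ [s]) t)
            ≤ trip G s (σ₁ w s) (σ₂ w s) (fun t => β * safeW G σ₁ σ₂ F a (w ++ [s]) t) :=
              trip_mono hG (h1 w s).1 (h2 w s).1 fun t => ih (w ++ [s]) t
          _ = β * trip G s (σ₁ w s) (σ₂ w s) (fun t => safeW G σ₁ σ₂ F a (w ++ [s]) t) :=
              trip_smul β _
      · rw [safeW_of_not_mem hs, safeW_of_not_mem hs, mul_zero]

lemma safeW_pow (hG : G.IsGame) (h1 : IsStrat1 G σ₁) (h2 : IsStrat2 G σ₂)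
    {N : ℕ} (hN : ∀ w s, safeW G σ₁ σ₂ F N w s ≤ 1/2) :
    ∀ m w s, safeW G σ₁ σ₂ F (m * N) w s ≤ (1/2 : ℝ) ^ m := by
  intro m
  induction m with
  | zero =>
      intro w s
      rw [Nat.zero_mul, pow_zero]
      exact safeW_le_one hG h1 h2 0 w s
  | succ m ih =>
      intro w s
      have hidx : (m + 1) * N = m * N + N := by ring
      rw [hidx]
      calc safeW G σ₁ σ₂ F (m * N + N) w s
          ≤ (1/2 : ℝ) * safeW G σ₁ σ₂ F (m * N) w s :=
            safeW_add_bound hG h1 h2 (by norm_num) hN (m * N) w s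
        _ ≤ (1/2 : ℝ) * (1/2 : ℝ) ^ m := by
            have := ih w s
            nlinarith [safeW_nonneg (F := F) hG h1 h2 (m * N) w s]
        _ = (1/2 : ℝ) ^ (m + 1) := by ring

lemma safeLow_le_safeNI (hG : G.IsGame) (h1 : IsStrat1 G σ₁) (h2 : IsStrat2 G σ₂)
    {K : ℕ} {θ' : ℝ} {n₁ : ℕ}
    (hK : ∀ m, n₁ ≤ m → ∀ w s, safeLow G σ₁ σ₂ F I m K w s ≤ θ') :
    ∀ j m w s, safeLow G σ₁ σ₂ F I (j + (n₁ + 1) + m) (K + 1) w s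
      ≤ safeW G σ₁ σ₂ (F \ I) j w s + θ' := by
  intro j
  induction j with
  | zero =>
      intro m w s
      have hidx : 0 + (n₁ + 1) + m = (n₁ + m) + 1 := by omega
      rw [hidx, safeLow]
      by_cases hsF : s ∈ F
      · by_cases hsI : s ∈ I
        · simp only [hsF, hsI, if_true]
          have hle : trip G s (σ₁ w s) (σ₂ w s)
              (fun t => safeLow G σ₁ σ₂ F I (n₁ + m) K (w ++ [s]) t) ≤ θ' :=
            trip_le_const hG (h1 w s) (h2 w s) fun t => hK (n₁ + m) (by omega) _ t
          have h0 : 0 ≤ safeW G σ₁ σ₂ (F \ I) 0 w s := safeW_nonneg hG h1 h2 0 w s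
          linarith
        · simp only [hsF, hsI, if_true, if_false]
          have hle : trip G s (σ₁ w s) (σ₂ w s)
              (fun t => safeLow G σ₁ σ₂ F I (n₁ + m) (K + 1) (w ++ [s]) t) ≤ 1 :=
            trip_le_const hG (h1 w s) (h2 w s) fun t => safeLow_le_one hG h1 h2 _ _ _ t
          have hsw : safeW G σ₁ σ₂ (F \ I) 0 w s = 1 := by
            rw [safeW, if_pos (show s ∈ F \ I from ⟨hsF, hsI⟩)]
          have hθ0 : 0 ≤ θ' := le_trans (safeLow_nonneg hG h1 h2 n₁ K [] s) (hK n₁ le_rfl [] s)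
          linarith
      · simp only [hsF, if_false]
        have h0 : 0 ≤ safeW G σ₁ σ₂ (F \ I) 0 w s := safeW_nonneg hG h1 h2 0 w s
        have hθ0 : 0 ≤ θ' := le_trans (safeLow_nonneg hG h1 h2 n₁ K [] s) (hK n₁ le_rfl [] s)
        linarith
  | succ j ih =>
      intro m w s
      have hidx : (j + 1) + (n₁ + 1) + m = (j + (n₁ + 1) + m) + 1 := by omega
      rw [hidx, safeLow]
      by_cases hsF : s ∈ F
      · by_cases hsI : s ∈ I
        · simp only [hsF, hsI, if_true]
          have hle : trip G s (σ₁ w s) (σ₂ w s)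
              (fun t => safeLow G σ₁ σ₂ F I (j + (n₁ + 1) + m) K (w ++ [s]) t) ≤ θ' :=
            trip_le_const hG (h1 w s) (h2 w s) fun t => hK _ (by omega) _ t
          have h0 : 0 ≤ safeW G σ₁ σ₂ (F \ I) (j + 1) w s := safeW_nonneg hG h1 h2 _ w s
          linarith
        · simp only [hsF, hsI, if_true, if_false]
          have hmem : s ∈ F \ I := ⟨hsF, hsI⟩
          rw [safeW_succ, if_pos hmem]
          calc trip G s (σ₁ w s) (σ₂ w s)
                (fun t => safeLow G σ₁ σ₂ F I (j + (n₁ + 1) + m) (K + 1) (w ++ [s]) t)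
              ≤ trip G s (σ₁ w s) (σ₂ w s)
                (fun t => safeW G σ₁ σ₂ (F \ I) j (w ++ [s]) t + θ') :=
                trip_mono hG (h1 w s).1 (h2 w s).1 fun t => ih m (w ++ [s]) t
            _ = trip G s (σ₁ w s) (σ₂ w s)
                  (fun t => safeW G σ₁ σ₂ (F \ I) j (w ++ [s]) t) + θ' := by
                rw [trip_add (fun t => safeW G σ₁ σ₂ (F \ I) j (w ++ [s]) t) (fun _ => θ'),
                  trip_const hG (h1 w s) (h2 w s) θ']
      · simp only [hsF, if_false]
        have h0 : 0 ≤ safeW G σ₁ σ₂ (F \ I) (j + 1) w s := safeW_nonneg hG h1 h2 _ w s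
        have hθ0 : 0 ≤ θ' := le_trans (safeLow_nonneg hG h1 h2 n₁ K [] s) (hK n₁ le_rfl [] s)
        linarith

lemma safeLow_small (hG : G.IsGame) (h1 : IsStrat1 G σ₁) (h2 : IsStrat2 G σ₂)
    {N : ℕ} (hN : ∀ w s, safeW G σ₁ σ₂ (F \ I) N w s ≤ 1/2) :
    ∀ (K : ℕ) (θ : ℝ), 0 < θ →
      ∃ n₀, ∀ n, n₀ ≤ n → ∀ w s, safeLow G σ₁ σ₂ F I n K w s ≤ θ := by
  intro K
  induction K with
  | zero =>
      intro θ hθ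
      exact ⟨0, fun n _ w s => by rw [safeLow]; linarith⟩
  | succ K ih =>
      intro θ hθ
      obtain ⟨n₁, hn₁⟩ := ih (θ/2) (by linarith)
      obtain ⟨m, hm⟩ := exists_pow_lt_of_lt_one (half_pos hθ) (by norm_num : (1:ℝ)/2 < 1)
      refine ⟨m * N + (n₁ + 1), fun n hn w s => ?_⟩
      obtain ⟨d, rfl⟩ := Nat.exists_eq_add_of_le hn
      have hgoal := safeLow_le_safeNI hG h1 h2 (fun m' hm' w' s' => hn₁ m' hm' w' s')
        (m * N) d w s
      have hpow := safeW_pow (F := F \ I) hG h1 h2 hN m w s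
      have hidx : m * N + (n₁ + 1) + d = m * N + (n₁ + 1) + d := rfl
      calc safeLow G σ₁ σ₂ F I (m * N + (n₁ + 1) + d) (K + 1) w s
          ≤ safeW G σ₁ σ₂ (F \ I) (m * N) w s + θ/2 := hgoal
        _ ≤ (1/2 : ℝ) ^ m + θ/2 := by linarith
        _ ≤ θ := by linarith [hm.le]

/-- Main properness estimate: if the valuation `v` strictly increases (by `ε`) on `I`
in one step, and safety within `F \ I` decays uniformly, then staying in `F` forever
has probability `0`. -/
lemma safe_small_of_step (hG : G.IsGame) {ξ : S → M → ℝ} (hξ : IsSel1 G ξ)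
    {σ₂ : List S → S → M → ℝ} (h2 : IsStrat2 G σ₂) {v : S → ℝ} {ε : ℝ} (hε : 0 < ε)
    (hv0 : ∀ t, 0 ≤ v t) (hv1 : ∀ t, v t ≤ 1)
    (hstep : ∀ (w : List S) (s : S),
      v s + ε * (if s ∈ I then 1 else 0) ≤ trip G s (ξ s) (σ₂ w s) v)
    {N : ℕ} (hN : ∀ w s, safeW G (ml ξ) σ₂ (F \ I) N w s ≤ 1/2)
    {θ : ℝ} (hθ : 0 < θ) (s : S) :
    ∃ n, safeW G (ml ξ) σ₂ F n [] s ≤ θ := by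
  have h1 : IsStrat1 G (ml ξ) := fun _ s' => hξ s'
  obtain ⟨K, hK⟩ := exists_nat_gt (2 / (ε * θ))
  have hKpos : (0:ℝ) < K := lt_trans (by positivity) hK
  obtain ⟨n₀, hn₀⟩ := safeLow_small (F := F) (I := I) hG h1 h2 hN K (θ/2) (half_pos hθ)
  refine ⟨n₀, ?_⟩
  have ha := safeW_le_cnt_add_low (F := F) (I := I) hG h1 h2 n₀ K [] s
  have hb : cntGe G (ml ξ) σ₂ I n₀ K [] s ≤ θ/2 := by
    have hm := markov_cnt (I := I) hG h1 h2 n₀ K [] s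
    have hvis := visitSum_le_inv (I := I) hG h1 h2 hε hv0 hv1
      (fun w s' => hstep w s') n₀ [] s
    have hcnt : cntGe G (ml ξ) σ₂ I n₀ K [] s ≤ 1 / (ε * K) := by
      rw [le_div_iff₀ (by positivity)]
      calc cntGe G (ml ξ) σ₂ I n₀ K [] s * (ε * K)
          = ((K : ℝ) * cntGe G (ml ξ) σ₂ I n₀ K [] s) * ε := by ring
        _ ≤ (1 / ε) * ε := by
            have := le_trans hm hvis
            nlinarith
        _ = 1 := by field_simp
    have hlast : 1 / (ε * K) ≤ θ / 2 := by
      rw [div_le_div_iff₀ (by positivity) (by norm_num)]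
      have h2' := (div_lt_iff₀ (by positivity : (0:ℝ) < ε * θ)).1 hK
      nlinarith
    linarith
  have hc := hn₀ n₀ le_rfl [] s
  linarith

/-- Submartingale bound: a sub-invariant valuation is bounded by finite-horizon
reach + safe probabilities. -/
lemma w_le_reach_add_safe (hG : G.IsGame) {ξ : S → M → ℝ} (hξ : IsSel1 G ξ)
    {σ₂ : List S → S → M → ℝ} (h2 : IsStrat2 G σ₂) {wv : S → ℝ}
    (hw1 : ∀ t, wv t ≤ 1)
    (hwW2 : ∀ s, s ∈ W2 G T → s ∉ T → wv s ≤ 0)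
    (hstepw : ∀ s, s ∉ T ∪ W2 G T → ∀ (w : List S),
      wv s ≤ trip G s (ξ s) (σ₂ w s) wv) :
    ∀ n w s, wv s ≤ reachW G (ml ξ) σ₂ T n w s
      + safeW G (ml ξ) σ₂ ((T ∪ W2 G T)ᶜ) n w s := by
  have h1 : IsStrat1 G (ml ξ) := fun _ s' => hξ s'
  intro n
  induction n with
  | zero =>
      intro w s
      rw [reachW, safeW]
      by_cases hsT : s ∈ T
      · have : s ∉ (T ∪ W2 G T)ᶜ := fun hc => hc (Or.inl hsT)
        simp only [hsT, if_true, this, if_false]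
        linarith [hw1 s]
      · by_cases hsW : s ∈ W2 G T
        · have : s ∉ (T ∪ W2 G T)ᶜ := fun hc => hc (Or.inr hsW)
          simp only [hsT, if_false, this]
          linarith [hwW2 s hsW hsT]
        · have : s ∈ (T ∪ W2 G T)ᶜ := fun hc => hc.elim hsT hsW
          simp only [hsT, if_false, this, if_true]
          linarith [hw1 s]
  | succ n ih =>
      intro w s
      by_cases hsT : s ∈ T
      · have hnc : s ∉ (T ∪ W2 G T)ᶜ := fun hc => hc (Or.inl hsT)
        rw [reachW_succ, if_pos hsT, safeW_of_not_mem hnc]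
        linarith [hw1 s]
      · by_cases hsW : s ∈ W2 G T
        · have hnc : s ∉ (T ∪ W2 G T)ᶜ := fun hc => hc (Or.inr hsW)
          rw [reachW_succ, if_neg hsT, safeW_of_not_mem hnc]
          have hr : 0 ≤ trip G s (ml ξ w s) (σ₂ w s)
              (fun t => reachW G (ml ξ) σ₂ T n (w ++ [s]) t) :=
            trip_nonneg hG (h1 w s).1 (h2 w s).1 fun t => reachW_nonneg hG h1 h2 n _ t
          linarith [hwW2 s hsW hsT]
        · have hc : s ∈ (T ∪ W2 G T)ᶜ := fun hc => hc.elim hsT hsW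
          have hnu : s ∉ T ∪ W2 G T := hc
          rw [reachW_succ, if_neg hsT, safeW_succ, if_pos hc]
          rw [← trip_add]
          calc wv s ≤ trip G s (ξ s) (σ₂ w s) wv := hstepw s hnu w
            _ ≤ trip G s (ξ s) (σ₂ w s)
                (fun t => reachW G (ml ξ) σ₂ T n (w ++ [s]) t
                  + safeW G (ml ξ) σ₂ ((T ∪ W2 G T)ᶜ) n (w ++ [s]) t) :=
              trip_mono hG (hξ s).1 (h2 w s).1 fun t => ih (w ++ [s]) t

end SI

end CGame

/-- **The strategy-improvement step improves the value (reachability).**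
Let `γ` be a proper player-1 selector with value `v = ⟨1⟩val^{ml γ}(Reach T)`, let
`I = {s ∉ T ∪ W₂ | Pre₁(v)(s) > v(s)}`, and let `γ'` agree with `γ` outside `I`
and satisfy `Pre_{1:γ'}(v)(s) = Pre₁(v)(s) > v(s)` on `I`. Then the new value
`v' = ⟨1⟩val^{ml γ'}(Reach T)` satisfies `v' ≥ Pre₁(v)` pointwise; consequently
`v' ≥ v` pointwise, and `v'(s) > v(s)` for all `s ∈ I`. -/
theorem improvement_step_improves_value_reach
    {S M : Type} [Fintype S] [DecidableEq S] [Fintype M] [DecidableEq M]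
    (G : CGame S M) (hG : G.IsGame) (T : Set S)
    (habs : ∀ s ∈ T ∪ CGame.W2 G T, CGame.Absorbing G s)
    (γ γ' : S → M → ℝ) (hγ : CGame.IsSel1 G γ) (hγ' : CGame.IsSel1 G γ')
    (hproper : CGame.Proper G T (CGame.ml γ))
    (v : S → ℝ) (hv : v = CGame.valReachUnder G (CGame.ml γ) T)
    (I : Set S)
    (hI : I = {s | s ∉ T ∪ CGame.W2 G T ∧ v s < CGame.pre1 G v s})
    (hagree : ∀ s ∉ I, γ' s = γ s)
    (himp : ∀ s ∈ I, CGame.pre1Sel G v s (γ' s) = CGame.pre1 G v s)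
    (v' : S → ℝ) (hv' : v' = CGame.valReachUnder G (CGame.ml γ') T) :
    (∀ s, CGame.pre1 G v s ≤ v' s) ∧ (∀ s, v s ≤ v' s) ∧ ∀ s ∈ I, v s < v' s := by
    classical
  have h1γ : CGame.IsStrat1 G (CGame.ml γ) := fun _ s => hγ s
  have h1γ' : CGame.IsStrat1 G (CGame.ml γ') := fun _ s => hγ' s
  have hne : Nonempty {σ // CGame.IsStrat2 G σ} := CGame.strat2_nonempty hG
  have hv0 : ∀ t, 0 ≤ v t := by
    rw [hv]; exact fun t => CGame.valReachUnder_nonneg hG h1γ t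
  have hv1 : ∀ t, v t ≤ 1 := by
    rw [hv]; exact fun t => CGame.valReachUnder_le_one hG h1γ t
  have hvW2 : ∀ s ∈ CGame.W2 G T, v s = 0 := by
    rw [hv]; exact fun s hs => CGame.valReachUnder_eq_zero_of_W2 hG h1γ hs
  have hvfix : ∀ s, ∀ y : M → ℝ, CGame.IsDistOn (G.Γ₂ s) y →
      v s ≤ CGame.preSS G v s (γ s) y := by
    rw [hv]
    intro s y hy
    by_cases hsT : s ∈ T
    · rw [CGame.preSS_absorbing hG (habs s (Or.inl hsT)) (hγ s) hy]
    · exact CGame.valReachUnder_le_preSS hG hγ hsT hy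
  have hmemI : ∀ s, s ∈ I ↔ s ∉ T ∪ CGame.W2 G T ∧ v s < CGame.pre1 G v s := fun s => by
    rw [hI]; exact Iff.rfl
  have hIF : ∀ s ∈ I, s ∉ T ∪ CGame.W2 G T ∧ v s < CGame.pre1 G v s :=
    fun s hs => (hmemI s).1 hs
  have hnotI : ∀ s, s ∉ I → s ∉ T ∪ CGame.W2 G T → CGame.pre1 G v s ≤ v s := by
    intro s hs hsu
    by_contra hlt
    push_neg at hlt
    exact hs ((hmemI s).2 ⟨hsu, hlt⟩)
  rcases Set.eq_empty_or_nonempty I with hIe | hIne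
  · -- `I` is empty: `γ' = γ` and nothing changes
    have hgg : γ' = γ := funext fun s => hagree s (by rw [hIe]; exact Set.notMem_empty s)
    have hvv : v' = v := by rw [hv', hgg, ← hv]
    have hple : ∀ s, CGame.pre1 G v s ≤ v s := by
      intro s
      by_cases hsu : s ∈ T ∪ CGame.W2 G T
      · exact le_of_eq (CGame.pre1_absorbing hG (habs s hsu) v)
      · have hni : s ∉ I := by rw [hIe]; exact Set.notMem_empty s
        exact hnotI s hni hsu
    refine ⟨fun s => ?_, fun s => ?_, fun s hs => ?_⟩
    · rw [hvv]; exact hple s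
    · rw [hvv]
    · rw [hIe] at hs; exact absurd hs (Set.notMem_empty s)
  · -- `I` nonempty
    obtain ⟨s₀, hs₀⟩ := hIne
    have hIfin : ((Finset.univ.filter (fun s => s ∈ I)).image
        (fun s => CGame.pre1 G v s - v s)).Nonempty :=
      ⟨_, Finset.mem_image_of_mem _ (Finset.mem_filter.2 ⟨Finset.mem_univ s₀, hs₀⟩)⟩
    set ε := ((Finset.univ.filter (fun s => s ∈ I)).image
        (fun s => CGame.pre1 G v s - v s)).min' hIfin with hεdef
    have hεmem := ((Finset.univ.filter (fun s => s ∈ I)).image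
        (fun s => CGame.pre1 G v s - v s)).min'_mem hIfin
    rw [Finset.mem_image] at hεmem
    obtain ⟨s₁, hs₁, hεeq⟩ := hεmem
    have hs₁I : s₁ ∈ I := (Finset.mem_filter.1 hs₁).2
    have hε : 0 < ε := by
      rw [hεdef, ← hεeq]
      have := (hIF s₁ hs₁I).2
      linarith
    have hεle : ∀ s ∈ I, ε ≤ CGame.pre1 G v s - v s := fun s hs =>
      Finset.min'_le _ _
        (Finset.mem_image_of_mem _ (Finset.mem_filter.2 ⟨Finset.mem_univ s, hs⟩))
    -- bounds for the improved valuation `max v (pre1 v)`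
    have hwv0 : ∀ t, 0 ≤ max (v t) (CGame.pre1 G v t) :=
      fun t => le_trans (hv0 t) (le_max_left _ _)
    have hwv1 : ∀ t, max (v t) (CGame.pre1 G v t) ≤ 1 :=
      fun t => max_le (hv1 t) (CGame.pre1_le_one hG hv0 hv1 t)
    have hwvW2 : ∀ s, s ∈ CGame.W2 G T → s ∉ T → max (v s) (CGame.pre1 G v s) ≤ 0 := by
      intro s hs hsT
      rw [CGame.pre1_absorbing hG (habs s (Or.inr hs)) v, max_self, hvW2 s hs]
    -- uniform safety bound for γ, transferred to γ'
    obtain ⟨N, hN⟩ := CGame.exists_uniform_safe hG hγ hproper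
    have hN' : ∀ σ₂, CGame.IsStrat2 G σ₂ → ∀ w s,
        CGame.safeW G (CGame.ml γ') σ₂ ((T ∪ CGame.W2 G T)ᶜ \ I) N w s ≤ 1/2 := by
      intro σ₂ h2 w s
      have hcongr := CGame.safeW_congr_sel (G := G) (σ₂ := σ₂)
        (F := (T ∪ CGame.W2 G T)ᶜ \ I) (ξ := γ') (ξ' := γ)
        (fun s' hs' => hagree s' hs'.2) N w s
      rw [hcongr]
      exact le_trans (CGame.safeW_mono_set hG h1γ h2 Set.diff_subset N w s) (hN σ₂ h2 w s)
    -- the key bound: max v (pre1 v) ≤ v'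
    have hkey : ∀ s, max (v s) (CGame.pre1 G v s)
        ≤ CGame.valReachUnder G (CGame.ml γ') T s := by
      intro s
      refine le_ciInf fun σ₂sub => ?_
      obtain ⟨σ₂f, h2⟩ := σ₂sub
      show max (v s) (CGame.pre1 G v s) ≤ CGame.prReach G (CGame.ml γ') σ₂f T s
      have hstep : ∀ (w : List S) (s' : S),
          v s' + ε * (if s' ∈ I then 1 else 0)
            ≤ CGame.trip G s' (γ' s') (σ₂f w s') v := by
        intro w s'
        have hy := h2 w s'
        rw [← CGame.preSS_eq_trip]
        by_cases hsI : s' ∈ I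
        · simp only [hsI, if_true, mul_one]
          have ha : CGame.pre1Sel G v s' (γ' s')
              ≤ CGame.preSS G v s' (γ' s') (σ₂f w s') :=
            CGame.pre1Sel_le_preSS hG hv0 (hγ' s').1 hy
          have hb := himp s' hsI
          have hc := hεle s' hsI
          linarith
        · simp only [hsI, if_false, mul_zero, add_zero]
          by_cases hsu : s' ∈ T ∪ CGame.W2 G T
          · rw [CGame.preSS_absorbing hG (habs s' hsu) (hγ' s') hy]
          · have hvf := hvfix s' (σ₂f w s') hy
            rw [hagree s' hsI]
            exact hvf
      have hwstepw : ∀ s', s' ∉ T ∪ CGame.W2 G T → ∀ w,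
          max (v s') (CGame.pre1 G v s')
            ≤ CGame.trip G s' (γ' s') (σ₂f w s')
                (fun t => max (v t) (CGame.pre1 G v t)) := by
        intro s' hsu w
        have hy := h2 w s'
        rw [← CGame.preSS_eq_trip]
        have hchain : max (v s') (CGame.pre1 G v s')
            ≤ CGame.pre1Sel G (fun t => max (v t) (CGame.pre1 G v t)) s' (γ' s') := by
          by_cases hsI : s' ∈ I
          · rw [max_eq_right (hIF s' hsI).2.le, ← himp s' hsI]
            exact CGame.pre1Sel_mono hG hv0 (fun t => le_max_left _ _) (hγ' s').1
          · rw [max_eq_left (hnotI s' hsI hsu)]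
            have hx : v s' ≤ CGame.pre1Sel G v s' (γ s') :=
              CGame.le_pre1Sel hG fun y hy' => hvfix s' y hy'
            rw [← hagree s' hsI] at hx
            exact le_trans hx
              (CGame.pre1Sel_mono hG hv0 (fun t => le_max_left _ _) (hγ' s').1)
        exact le_trans hchain (CGame.pre1Sel_le_preSS hG hwv0 (hγ' s').1 hy)
      refine le_of_forall_pos_le_add fun θ hθ => ?_
      obtain ⟨n, hn⟩ := CGame.safe_small_of_step hG hγ' h2 hε hv0 hv1 hstep
        (hN' σ₂f h2) hθ s
      have hra := CGame.w_le_reach_add_safe hG hγ' h2 hwv1 hwvW2 hwstepw n [] s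
      have hr := CGame.reachW_le_prReach (T := T) hG h1γ' h2 n s
      linarith
    refine ⟨fun s => ?_, fun s => ?_, fun s hs => ?_⟩
    · rw [hv']; exact le_trans (le_max_right _ _) (hkey s)
    · rw [hv']; exact le_trans (le_max_left _ _) (hkey s)
    · rw [hv']
      exact lt_of_lt_of_le (hIF s hs).2 (le_trans (le_max_right _ _) (hkey s))
end

section
/- Let G be a binary Markov chain on a finite state set S with a reachability objective Reach(T) for T ⊆ S. Then for every state s ∈ S, the probability of reaching T from s equals p/q for some natural numbers p, q with p, q ≤ 4^{|S|−1}. -/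
open scoped Classical

/-- A finite Markov chain: a transition function `δ` over a finite state set. -/
structure MChain (St : Type) where
  δ : St → St → ℝ

namespace MChain

variable {St : Type} [Fintype St] [DecidableEq St]

/-- Well-formedness: each row of `δ` is a probability distribution. -/
def IsChain (g : MChain St) : Prop :=
  (∀ s t, 0 ≤ g.δ s t) ∧ ∀ s, (∑ t, g.δ s t) = 1

/-- A Markov chain is binary if every state has at most two successors with
positive probability, and when it has exactly two, each has probability 1/2. -/
def Binary (g : MChain St) : Prop :=
  ∀ s, ({t | g.δ s t ≠ 0} : Set St).ncard ≤ 2 ∧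
    (({t | g.δ s t ≠ 0} : Set St).ncard = 2 → ∀ t, g.δ s t ≠ 0 → g.δ s t = 1 / 2)

/-- Probability of reaching `T` within `n` steps from `s`. -/
noncomputable def reachW (g : MChain St) (T : Set St) : ℕ → St → ℝ
  | 0, s => if s ∈ T then 1 else 0
  | n + 1, s => if s ∈ T then 1 else ∑ t, g.δ s t * reachW g T n t

/-- Probability of eventually reaching `T` from `s`. -/
noncomputable def prReach (g : MChain St) (T : Set St) (s : St) : ℝ :=
  ⨆ n : ℕ, reachW g T n s

end MChain


lemma det_abs_le_colsum {n : Type*} [Fintype n] [DecidableEq n] (M : Matrix n n ℝ) :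
    |M.det| ≤ ∏ i, ∑ j, |M j i| := by
  rw [Matrix.det_apply]
  have key : ∀ σ : Equiv.Perm n, |Equiv.Perm.sign σ • ∏ i, M (σ i) i| = ∏ i, |M (σ i) i| := by
    intro σ
    rcases Int.units_eq_one_or (Equiv.Perm.sign σ) with h | h <;>
      simp [h, Finset.abs_prod]
  calc |∑ σ : Equiv.Perm n, Equiv.Perm.sign σ • ∏ i, M (σ i) i|
      ≤ ∑ σ : Equiv.Perm n, |Equiv.Perm.sign σ • ∏ i, M (σ i) i| := Finset.abs_sum_le_sum_abs _ _
    _ = ∑ σ : Equiv.Perm n, ∏ i, |M (σ i) i| := Finset.sum_congr rfl fun σ _ => key σ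
    _ ≤ ∑ f : n → n, ∏ i, |M (f i) i| := by
        have himg : ∑ f ∈ Finset.univ.image (fun σ : Equiv.Perm n => (σ : n → n)),
            (∏ i, |M (f i) i|) = ∑ σ : Equiv.Perm n, ∏ i, |M (σ i) i| :=
          Finset.sum_image (fun σ _ τ _ h => Equiv.coe_fn_injective h)
        rw [← himg]
        refine Finset.sum_le_sum_of_subset_of_nonneg (Finset.subset_univ _) ?_
        intro f _ _
        exact Finset.prod_nonneg fun i _ => abs_nonneg _
    _ = ∏ i, ∑ j, |M j i| := (Fintype.prod_sum (fun i (j : n) => |M j i|)).symm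

lemma det_abs_le_rowsum {n : Type*} [Fintype n] [DecidableEq n] (M : Matrix n n ℝ) :
    |M.det| ≤ ∏ i, ∑ j, |M i j| := by
  rw [← Matrix.det_transpose]
  exact det_abs_le_colsum M.transpose

namespace MChain
variable {St : Type} [Fintype St] [DecidableEq St]
variable (g : MChain St) (T : Set St)

lemma delta_mem (hg : g.IsChain) (hbin : g.Binary) (s t : St) :
    g.δ s t = 0 ∨ g.δ s t = 1/2 ∨ g.δ s t = 1 := by
  by_cases h0 : g.δ s t = 0
  · exact Or.inl h0
  set F : Finset St := Finset.univ.filter (fun u => g.δ s u ≠ 0) with hF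
  have hcard : ({u | g.δ s u ≠ 0} : Set St).ncard = F.card := by
    rw [hF]
    rw [← Set.ncard_coe_finset]
    congr 1
    ext u; simp
  have hsumF : ∑ u ∈ F, g.δ s u = 1 := by
    rw [← hg.2 s, hF]
    exact Finset.sum_filter_ne_zero Finset.univ
  have htF : t ∈ F := by simp [hF, h0]
  rcases Nat.lt_or_ge F.card 2 with hlt | hge
  · -- card ≤ 1, and t ∈ F so card = 1, so F = {t}
    have : F = {t} := by
      apply Finset.eq_singleton_iff_unique_mem.mpr
      refine ⟨htF, fun u hu => ?_⟩
      by_contra hne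
      have : 2 ≤ F.card := Finset.one_lt_card.mpr ⟨u, hu, t, htF, hne⟩
      omega
    rw [this, Finset.sum_singleton] at hsumF
    exact Or.inr (Or.inr hsumF)
  · have h2 : ({u | g.δ s u ≠ 0} : Set St).ncard = 2 := by
      have := (hbin s).1
      omega
    exact Or.inr (Or.inl ((hbin s).2 h2 t h0))

lemma reachW_nonneg (hg : g.IsChain) : ∀ n s, 0 ≤ reachW g T n s := by
  intro n
  induction n with
  | zero => intro s; rw [reachW]; split <;> norm_num
  | succ n ih =>
    intro s; rw [reachW]; split
    · norm_num
    · exact Finset.sum_nonneg fun t _ => mul_nonneg (hg.1 s t) (ih t)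

lemma reachW_le_one (hg : g.IsChain) : ∀ n s, reachW g T n s ≤ 1 := by
  intro n
  induction n with
  | zero => intro s; rw [reachW]; split <;> norm_num
  | succ n ih =>
    intro s; rw [reachW]; split
    · norm_num
    · calc ∑ t, g.δ s t * reachW g T n t ≤ ∑ t, g.δ s t := by
            refine Finset.sum_le_sum fun t _ => ?_
            calc g.δ s t * reachW g T n t ≤ g.δ s t * 1 :=
                  mul_le_mul_of_nonneg_left (ih t) (hg.1 s t)
              _ = g.δ s t := mul_one _
        _ = 1 := hg.2 s

lemma reachW_mono (hg : g.IsChain) : ∀ n s, reachW g T n s ≤ reachW g T (n+1) s := by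
  intro n
  induction n with
  | zero =>
    intro s
    rw [reachW, reachW]
    split
    · exact le_refl _
    · exact Finset.sum_nonneg fun t _ => mul_nonneg (hg.1 s t) (reachW_nonneg g T hg 0 t)
  | succ n ih =>
    intro s
    rw [reachW, reachW]
    split
    · exact le_refl _
    · exact Finset.sum_le_sum fun t _ => mul_le_mul_of_nonneg_left (ih t) (hg.1 s t)

lemma reachW_monotone (hg : g.IsChain) (s : St) : Monotone (fun n => reachW g T n s) :=
  monotone_nat_of_le_succ fun n => reachW_mono g T hg n s

lemma reachW_bdd (hg : g.IsChain) (s : St) : BddAbove (Set.range fun n => reachW g T n s) :=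
  ⟨1, by rintro x ⟨n, rfl⟩; exact reachW_le_one g T hg n s⟩

lemma tendsto_reachW (hg : g.IsChain) (s : St) :
    Filter.Tendsto (fun n => reachW g T n s) Filter.atTop (nhds (prReach g T s)) :=
  tendsto_atTop_ciSup (reachW_monotone g T hg s) (reachW_bdd g T hg s)

lemma prReach_nonneg (hg : g.IsChain) (s : St) : 0 ≤ prReach g T s :=
  le_trans (reachW_nonneg g T hg 0 s) (le_ciSup (reachW_bdd g T hg s) 0)

lemma prReach_le_one (hg : g.IsChain) (s : St) : prReach g T s ≤ 1 :=
  ciSup_le fun n => reachW_le_one g T hg n s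

lemma reachW_mem (s : St) (hs : s ∈ T) (n : ℕ) : reachW g T n s = 1 := by
  cases n <;> rw [reachW] <;> simp [hs]

lemma prReach_mem (s : St) (hs : s ∈ T) : prReach g T s = 1 := by
  have : ∀ n, reachW g T n s = 1 := reachW_mem g T s hs
  simp only [prReach, this]
  exact ciSup_const

lemma prReach_fix (hg : g.IsChain) (s : St) (hs : s ∉ T) :
    prReach g T s = ∑ t, g.δ s t * prReach g T t := by
  have h1 : Filter.Tendsto (fun n => reachW g T (n+1) s) Filter.atTop
      (nhds (prReach g T s)) :=
    (Filter.tendsto_add_atTop_iff_nat 1).mpr (tendsto_reachW g T hg s)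
  have h2 : Filter.Tendsto (fun n => ∑ t, g.δ s t * reachW g T n t) Filter.atTop
      (nhds (∑ t, g.δ s t * prReach g T t)) := by
    refine tendsto_finset_sum _ fun t _ => ?_
    exact (tendsto_reachW g T hg t).const_mul _
  have heq : (fun n => reachW g T (n+1) s) = fun n => ∑ t, g.δ s t * reachW g T n t := by
    funext n; rw [reachW]; simp [hs]
  rw [heq] at h1
  exact tendsto_nhds_unique h1 h2

lemma reachW_empty (hT : ∀ t, t ∉ T) : ∀ n s, reachW g T n s = 0 := by
  intro n
  induction n with
  | zero => intro s; rw [reachW]; simp [hT s]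
  | succ n ih => intro s; rw [reachW]; simp [hT s, ih]

lemma prReach_zero_of_not_U (hU : ∀ n, ¬ 0 < reachW g T n s) (hg : g.IsChain) :
    prReach g T s = 0 := by
  have : ∀ n, reachW g T n s = 0 := fun n =>
    le_antisymm (not_lt.mp (hU n)) (reachW_nonneg g T hg n s)
  simp only [prReach, this]
  exact ciSup_const

end MChain

open Matrix

/-- **Values of binary Markov chains are small-denominator rationals.**
Let `g` be a binary Markov chain on a finite state set with reachability objective
`Reach T`. Then for every state `s`, the probability of reaching `T` from `s`
equals `p/q` for some natural numbers `p, q ≤ 4^{|S|−1}` (with `q > 0`). -/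
theorem binary_markov_chain_value_rational
    {St : Type} [Fintype St] [DecidableEq St]
    (g : MChain St) (hg : g.IsChain) (hbin : g.Binary) (T : Set St) :
    ∀ s : St, ∃ p q : ℕ, 0 < q ∧ p ≤ 4 ^ (Fintype.card St - 1) ∧
      q ≤ 4 ^ (Fintype.card St - 1) ∧ MChain.prReach g T s = (p : ℝ) / (q : ℝ) := by
  intro s
  have hone : 1 ≤ 4 ^ (Fintype.card St - 1) := Nat.one_le_pow _ _ (by norm_num)
  by_cases hsT : s ∈ T
  · exact ⟨1, 1, one_pos, hone, hone, by
      rw [MChain.prReach_mem g T s hsT]; norm_num⟩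
  set U : St → Prop := fun u => ∃ k, 0 < MChain.reachW g T k u with hUdef
  by_cases hsU : U s
  swap
  · refine ⟨0, 1, one_pos, by positivity, hone, ?_⟩
    rw [MChain.prReach_zero_of_not_U g T (fun n hn => hsU ⟨n, hn⟩) hg]
    norm_num
  -- main case
  classical
  set P : St → Prop := fun u => u ∉ T ∧ U u with hPdef
  set V := Subtype P with hVdef
  have hsP : P s := ⟨hsT, hsU⟩
  set sv : V := ⟨s, hsP⟩ with hsv
  -- T is nonempty
  have hTne : ∃ t, t ∈ T := by
    by_contra hTe
    push_neg at hTe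
    obtain ⟨k, hk⟩ := hsU
    rw [MChain.reachW_empty g T hTe k s] at hk
    exact lt_irrefl 0 hk
  -- transitions are in {0, 1/2, 1}
  have hδ0 : ∀ u t, 0 ≤ g.δ u t := hg.1
  have hδ1 : ∀ u t, g.δ u t ≤ 1 := by
    intro u t
    rw [← hg.2 u]
    exact Finset.single_le_sum (fun t _ => hδ0 u t) (Finset.mem_univ t)
  -- the three-way partition of the sum over all states
  set FT : Finset St := Finset.univ.filter (· ∈ T) with hFT
  have hsplit : ∀ f : St → ℝ,
      ∑ t, f t = (∑ t ∈ FT, f t) + ((∑ j : V, f j) +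
        (∑ t ∈ (Finset.univ.filter (fun u => u ∉ T)).filter (fun u => ¬ U u), f t)) := by
    intro f
    rw [← Finset.sum_filter_add_sum_filter_not Finset.univ (· ∈ T) f]
    congr 1
    rw [← Finset.sum_filter_add_sum_filter_not (Finset.univ.filter (fun u => u ∉ T)) U f]
    congr 1
    refine Finset.sum_subtype _ (fun x => ?_) f
    simp [hPdef, and_comm]
  -- the vector of values, matrix, rhs
  set x : V → ℝ := fun i => MChain.prReach g T i.1 with hx
  set b : V → ℝ := fun i => ∑ t ∈ FT, g.δ i.1 t with hb
  set D : Matrix V V ℝ := fun i j => (if i = j then 2 else 0) - 2 * g.δ i.1 j.1 with hD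
  set c : V → ℝ := fun i => ∑ t ∈ FT, 2 * g.δ i.1 t with hc
  have hcb : ∀ i, c i = 2 * b i := by
    intro i; rw [hc, hb]; rw [Finset.mul_sum]
  have hbnn : ∀ i, 0 ≤ b i := fun i => Finset.sum_nonneg fun t _ => hδ0 _ t
  -- row mass bound
  have hrow1 : ∀ i : V, (∑ j : V, g.δ i.1 j.1) + b i ≤ 1 := by
    intro i
    have := hsplit (fun t => g.δ i.1 t)
    rw [hg.2 i.1] at this
    have hnn : 0 ≤ ∑ t ∈ (Finset.univ.filter (fun u => u ∉ T)).filter (fun u => ¬ U u),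
        g.δ i.1 t := Finset.sum_nonneg fun t _ => hδ0 _ t
    rw [hb]
    linarith
  -- mulVec computation
  have hmul : ∀ v : V → ℝ, ∀ i : V, (D *ᵥ v) i = 2 * v i - 2 * ∑ j : V, g.δ i.1 j.1 * v j := by
    intro v i
    simp only [Matrix.mulVec, dotProduct, hD, sub_mul, Finset.sum_sub_distrib,
      ite_mul, zero_mul]
    rw [Finset.sum_ite_eq Finset.univ i (fun j => 2 * v j), if_pos (Finset.mem_univ i),
      Finset.mul_sum]
    congr 1
    exact Finset.sum_congr rfl fun j _ => by ring
  -- fixed point equation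
  have heq : ∀ i : V, x i = (∑ j : V, g.δ i.1 j.1 * x j) + b i := by
    intro i
    have hfix := MChain.prReach_fix g T hg i.1 i.2.1
    rw [hsplit (fun t => g.δ i.1 t * MChain.prReach g T t)] at hfix
    beta_reduce at hfix
    have h1 : ∑ t ∈ FT, g.δ i.1 t * MChain.prReach g T t = b i := by
      rw [hb]
      refine Finset.sum_congr rfl fun t ht => ?_
      rw [MChain.prReach_mem g T t (by simpa [hFT] using ht), mul_one]
    have h2 : ∑ t ∈ (Finset.univ.filter (fun u => u ∉ T)).filter (fun u => ¬ U u),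
        g.δ i.1 t * MChain.prReach g T t = 0 := by
      refine Finset.sum_eq_zero fun t ht => ?_
      have hnU : ¬ U t := (Finset.mem_filter.mp ht).2
      rw [MChain.prReach_zero_of_not_U g T (fun n hn => hnU ⟨n, hn⟩) hg, mul_zero]
    rw [h1, h2, add_zero] at hfix
    simp only [hx]
    rw [hfix]
    ring
  have hDx : D *ᵥ x = c := by
    funext i
    rw [hmul x i, heq i, hcb i]
    ring
  -- trivial kernel
  have hker : ∀ v : V → ℝ, D *ᵥ v = 0 → v = 0 := by
    intro v hv
    by_contra hvne
    have hvex : ∃ i, v i ≠ 0 := by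
      by_contra h
      push_neg at h
      exact hvne (funext h)
    obtain ⟨i₁, hi₁⟩ := hvex
    obtain ⟨i₀, -, hi₀⟩ := Finset.exists_max_image Finset.univ (fun i => |v i|)
      ⟨i₁, Finset.mem_univ i₁⟩
    set M := |v i₀| with hM
    have hMpos : 0 < M := lt_of_lt_of_le (abs_pos.mpr hi₁) (hi₀ i₁ (Finset.mem_univ i₁))
    set w : V → ℝ := if 0 ≤ v i₀ then v else -v with hw
    have hwM : w i₀ = M := by
      rw [hw, hM]
      split
      · rw [abs_of_nonneg (by assumption)]
      · rw [abs_of_neg (by linarith [not_le.mp (by assumption)])]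
        rfl
    have hwle : ∀ j, w j ≤ M := by
      intro j
      rw [hw]
      split
      · exact (le_abs_self _).trans (hi₀ j (Finset.mem_univ j))
      · exact (neg_le_abs _).trans (hi₀ j (Finset.mem_univ j))
    have hwv : D *ᵥ w = 0 := by
      rw [hw]
      split
      · exact hv
      · rw [Matrix.mulVec_neg, hv, neg_zero]
    have hweq : ∀ i : V, w i = ∑ j : V, g.δ i.1 j.1 * w j := by
      intro i
      have h0 := congrFun hwv i
      rw [hmul w i] at h0
      simp only [Pi.zero_apply] at h0
      linarith
    have hstep : ∀ i : V, w i = M → ∀ t : St, g.δ i.1 t ≠ 0 →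
        ∃ h : P t, w ⟨t, h⟩ = M := by
      intro i hiM t hδt
      have hS : ∑ j : V, g.δ i.1 j.1 ≤ 1 := by
        have h1 := hrow1 i
        have h2 := hbnn i
        linarith
      have hsum : ∑ j : V, g.δ i.1 j.1 * w j = M := by rw [← hweq i, hiM]
      have hle : ∑ j : V, g.δ i.1 j.1 * w j ≤ (∑ j : V, g.δ i.1 j.1) * M := by
        rw [Finset.sum_mul]
        exact Finset.sum_le_sum fun j _ => mul_le_mul_of_nonneg_left (hwle j) (hδ0 _ _)
      have hS1 : ∑ j : V, g.δ i.1 j.1 = 1 := by nlinarith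
      -- each max state sends all its mass inside V, to max states
      have hmax : ∀ j : V, g.δ i.1 j.1 ≠ 0 → w j = M := by
        have hz : ∑ j : V, g.δ i.1 j.1 * (M - w j) = 0 := by
          simp only [mul_sub]
          rw [Finset.sum_sub_distrib, hsum, ← Finset.sum_mul, hS1, one_mul, sub_self]
        have hnn : ∀ j ∈ Finset.univ, 0 ≤ g.δ i.1 (j : V).1 * (M - w j) := fun j _ =>
          mul_nonneg (hδ0 _ _) (by linarith [hwle j])
        intro j hj
        have := (Finset.sum_eq_zero_iff_of_nonneg hnn).mp hz j (Finset.mem_univ j)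
        rcases mul_eq_zero.mp this with h | h
        · exact absurd h hj
        · linarith
      have hout : ∀ t : St, ¬ P t → g.δ i.1 t = 0 := by
        have hpart := hsplit (g.δ i.1)
        rw [hg.2 i.1, hS1] at hpart
        have hnn1 : ∀ t ∈ FT, 0 ≤ g.δ i.1 t := fun t _ => hδ0 _ _
        have hnn2 : ∀ t ∈ (Finset.univ.filter (fun u => u ∉ T)).filter (fun u => ¬ U u),
            0 ≤ g.δ i.1 t := fun t _ => hδ0 _ _
        have hFTz : ∑ t ∈ FT, g.δ i.1 t = 0 := by
          have := Finset.sum_nonneg hnn2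
          have := Finset.sum_nonneg hnn1
          linarith
        have hRz : ∑ t ∈ (Finset.univ.filter (fun u => u ∉ T)).filter (fun u => ¬ U u),
            g.δ i.1 t = 0 := by
          have := Finset.sum_nonneg hnn1
          linarith
        intro t hPt
        by_cases htT : t ∈ T
        · exact (Finset.sum_eq_zero_iff_of_nonneg hnn1).mp hFTz t (by simp [hFT, htT])
        · have htU : ¬ U t := fun hU' => hPt ⟨htT, hU'⟩
          exact (Finset.sum_eq_zero_iff_of_nonneg hnn2).mp hRz t (by simp [htT, htU])
      by_cases hPt : P t
      · exact ⟨hPt, hmax ⟨t, hPt⟩ hδt⟩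
      · exact absurd (hout t hPt) hδt
    have hzero : ∀ k, ∀ i : V, w i = M → MChain.reachW g T k i.1 = 0 := by
      intro k
      induction k with
      | zero =>
        intro i hiM
        rw [MChain.reachW, if_neg i.2.1]
      | succ k ih =>
        intro i hiM
        rw [MChain.reachW, if_neg i.2.1]
        refine Finset.sum_eq_zero fun t _ => ?_
        by_cases hδt : g.δ i.1 t = 0
        · rw [hδt, zero_mul]
        · obtain ⟨hPt, hwt⟩ := hstep i hiM t hδt
          rw [ih ⟨t, hPt⟩ hwt, mul_zero]
    obtain ⟨k, hk⟩ := i₀.2.2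
    rw [hzero k i₀ hwM] at hk
    exact lt_irrefl 0 hk
  have hdet : D.det ≠ 0 := by
    intro h
    obtain ⟨v, hvne, hv⟩ := (Matrix.exists_mulVec_eq_zero_iff).mpr h
    exact hvne (hker v hv)
  -- Cramer
  have hcramer : D.det * x sv = (Matrix.updateCol D sv c).det := by
    have h1 : D *ᵥ (Matrix.cramer D c) = D *ᵥ (D.det • x) := by
      rw [Matrix.mulVec_cramer, Matrix.mulVec_smul, hDx]
    have hinj : ∀ u u' : V → ℝ, D *ᵥ u = D *ᵥ u' → u = u' := by
      intro u u' huu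
      have hz : D *ᵥ (u - u') = 0 := by rw [Matrix.mulVec_sub, huu, sub_self]
      exact sub_eq_zero.mp (hker _ hz)
    have h2 := congrFun (hinj _ _ h1) sv
    rw [Matrix.cramer_apply] at h2
    rw [h2]
    simp [smul_eq_mul]
  -- integer lifts
  set e : ℝ → ℤ := fun r => if r = 0 then 0 else if r = 1/2 then 1 else 2 with he
  have hecast : ∀ u t, ((e (g.δ u t) : ℤ) : ℝ) = 2 * g.δ u t := by
    intro u t
    rcases MChain.delta_mem g hg hbin u t with h | h | h <;> rw [h] <;> norm_num [he]
  set D₀ : Matrix V V ℤ := fun i j => (if i = j then 2 else 0) - e (g.δ i.1 j.1) with hD₀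
  set c₀ : V → ℤ := fun i => ∑ t ∈ FT, e (g.δ i.1 t) with hc₀
  have hDcast : D₀.map (Int.cast : ℤ → ℝ) = D := by
    ext i j
    rw [Matrix.map_apply]
    simp only [Matrix.map_apply, hD₀, hD]
    push_cast [hecast i.1 j.1]
    split <;> ring
  have hccast : ∀ i, ((c₀ i : ℤ) : ℝ) = c i := by
    intro i
    rw [hc₀, hc]
    push_cast
    exact Finset.sum_congr rfl fun t _ => hecast i.1 t
  have hdet0 : ((D₀.det : ℤ) : ℝ) = D.det := by
    have h := RingHom.map_det (Int.castRingHom ℝ) D₀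
    rw [RingHom.mapMatrix_apply, Int.coe_castRingHom, hDcast] at h
    exact h
  have hNcast : (((Matrix.updateCol D₀ sv c₀).det : ℤ) : ℝ) = (Matrix.updateCol D sv c).det := by
    have : (Matrix.updateCol D₀ sv c₀).map (Int.cast : ℤ → ℝ) = Matrix.updateCol D sv c := by
      ext i j
      by_cases hj : j = sv <;>
        simp [Matrix.updateCol_apply, hj, hccast, ← hDcast]
    have h := RingHom.map_det (Int.castRingHom ℝ) (Matrix.updateCol D₀ sv c₀)
    rw [RingHom.mapMatrix_apply, Int.coe_castRingHom, this] at h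
    exact h
  -- row sum bounds and determinant bounds
  have habsD : ∀ i j : V, |D i j| ≤ (if i = j then 2 else 0) + 2 * g.δ i.1 j.1 := by
    intro i j
    simp only [hD]
    have h0 := hδ0 i.1 j.1
    have h1 := hδ1 i.1 j.1
    by_cases hij : i = j
    · rw [if_pos hij, abs_le]
      constructor <;> linarith
    · rw [if_neg hij, abs_le]
      constructor <;> linarith
  set m := Fintype.card V with hm
  have hrowD : ∀ i : V, ∑ j : V, |D i j| ≤ 4 := by
    intro i
    have h1 : ∑ j : V, |D i j| ≤ ∑ j : V, ((if i = j then (2:ℝ) else 0) + 2 * g.δ i.1 j.1) :=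
      Finset.sum_le_sum fun j _ => habsD i j
    have h2 : ∑ j : V, ((if i = j then (2:ℝ) else 0) + 2 * g.δ i.1 j.1)
        = 2 + 2 * ∑ j : V, g.δ i.1 j.1 := by
      rw [Finset.sum_add_distrib, Finset.sum_ite_eq Finset.univ i (fun _ => (2:ℝ)),
        if_pos (Finset.mem_univ i), ← Finset.mul_sum]
    have h3 := hrow1 i
    have h4 := hbnn i
    linarith
  have hdetD : |D.det| ≤ 4 ^ m := by
    calc |D.det| ≤ ∏ i : V, ∑ j : V, |D i j| := det_abs_le_rowsum D
      _ ≤ ∏ _i : V, (4:ℝ) :=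
          Finset.prod_le_prod (fun i _ => Finset.sum_nonneg fun j _ => abs_nonneg _)
            (fun i _ => hrowD i)
      _ = 4 ^ m := by rw [Finset.prod_const, Finset.card_univ]
  have hrowM : ∀ i : V, ∑ j : V, |(Matrix.updateCol D sv c) i j| ≤ 4 := by
    intro i
    have hsplitrow : ∑ j : V, |(Matrix.updateCol D sv c) i j| =
        |(Matrix.updateCol D sv c) i sv| + ∑ j ∈ Finset.univ.erase sv, |(Matrix.updateCol D sv c) i j| :=
      (Finset.add_sum_erase Finset.univ _ (Finset.mem_univ sv)).symm
    rw [hsplitrow, Matrix.updateCol_self]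
    have h1 : ∑ j ∈ Finset.univ.erase sv, |(Matrix.updateCol D sv c) i j| ≤
        ∑ j ∈ Finset.univ.erase sv, ((if i = j then (2:ℝ) else 0) + 2 * g.δ i.1 j.1) := by
      refine Finset.sum_le_sum fun j hj => ?_
      rw [Matrix.updateCol_ne (Finset.ne_of_mem_erase hj)]
      exact habsD i j
    have h2 : ∑ j ∈ Finset.univ.erase sv, (if i = j then (2:ℝ) else 0) ≤ 2 := by
      calc ∑ j ∈ Finset.univ.erase sv, (if i = j then (2:ℝ) else 0)
          ≤ ∑ j : V, (if i = j then (2:ℝ) else 0) :=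
            Finset.sum_le_sum_of_subset_of_nonneg (Finset.erase_subset _ _)
              (fun j _ _ => by split <;> norm_num)
        _ = 2 := by
            rw [Finset.sum_ite_eq Finset.univ i (fun _ => (2:ℝ)), if_pos (Finset.mem_univ i)]
    have h3 : ∑ j ∈ Finset.univ.erase sv, 2 * g.δ i.1 j.1 ≤ 2 * ∑ j : V, g.δ i.1 j.1 := by
      rw [← Finset.mul_sum]
      have : ∑ j ∈ Finset.univ.erase sv, g.δ i.1 j.1 ≤ ∑ j : V, g.δ i.1 j.1 :=
        Finset.sum_le_sum_of_subset_of_nonneg (Finset.erase_subset _ _)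
          (fun j _ _ => hδ0 _ _)
      linarith
    have hcnn : 0 ≤ c i := by
      rw [hc]
      exact Finset.sum_nonneg fun t _ => mul_nonneg (by norm_num) (hδ0 _ _)
    have hcval : |c i| = 2 * b i := by rw [abs_of_nonneg hcnn, hcb]
    rw [Finset.sum_add_distrib] at h1
    have h5 := hrow1 i
    linarith
  have hdetN : |(Matrix.updateCol D sv c).det| ≤ 4 ^ m := by
    calc |(Matrix.updateCol D sv c).det| ≤ ∏ i : V, ∑ j : V, |(Matrix.updateCol D sv c) i j| :=
          det_abs_le_rowsum _
      _ ≤ ∏ _i : V, (4:ℝ) :=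
          Finset.prod_le_prod (fun i _ => Finset.sum_nonneg fun j _ => abs_nonneg _)
            (fun i _ => hrowM i)
      _ = 4 ^ m := by rw [Finset.prod_const, Finset.card_univ]
  have hmlt : m ≤ Fintype.card St - 1 := by
    obtain ⟨t₀, ht₀⟩ := hTne
    have : ¬ P t₀ := fun hPt => hPt.1 ht₀
    exact Nat.le_sub_one_of_lt (Fintype.card_subtype_lt (x := t₀) this)
  -- assemble
  set d : ℤ := D₀.det with hd
  set N : ℤ := (Matrix.updateCol D₀ sv c₀).det with hN
  have hdz : d ≠ 0 := by
    intro h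
    apply hdet
    rw [← hdet0, h, Int.cast_zero]
  have hpow : ((4:ℝ) ^ m) = ((4 ^ m : ℕ) : ℝ) := by push_cast; ring
  have hqb : d.natAbs ≤ 4 ^ m := by
    have h1 : ((d.natAbs : ℕ) : ℝ) ≤ ((4 ^ m : ℕ) : ℝ) := by
      rw [Nat.cast_natAbs, Int.cast_abs, hdet0, ← hpow]
      exact hdetD
    exact_mod_cast h1
  have hpb : N.natAbs ≤ 4 ^ m := by
    have h1 : ((N.natAbs : ℕ) : ℝ) ≤ ((4 ^ m : ℕ) : ℝ) := by
      rw [Nat.cast_natAbs, Int.cast_abs, hNcast, ← hpow]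
      exact hdetN
    exact_mod_cast h1
  have hxeq : x sv = (N : ℝ) / (d : ℝ) := by
    rw [eq_div_iff (by rw [hdet0]; exact hdet)]
    calc x sv * ((d:ℤ):ℝ) = D.det * x sv := by rw [hdet0]; ring
      _ = ((N:ℤ):ℝ) := by rw [hcramer, ← hNcast]
  have hxnn : 0 ≤ x sv := MChain.prReach_nonneg g T hg s
  refine ⟨N.natAbs, d.natAbs, Int.natAbs_pos.mpr hdz,
    hpb.trans (Nat.pow_le_pow_right (by norm_num) hmlt),
    hqb.trans (Nat.pow_le_pow_right (by norm_num) hmlt), ?_⟩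
  have habs : (N:ℝ)/(d:ℝ) = |(N:ℝ)/(d:ℝ)| := (abs_of_nonneg (hxeq ▸ hxnn)).symm
  have hfin : MChain.prReach g T s = x sv := rfl
  rw [hfin, hxeq, habs, abs_div]
  rw [Nat.cast_natAbs, Nat.cast_natAbs, Int.cast_abs, Int.cast_abs]
end

section
/- Let a₁, a₂, …, a_m be real numbers such that aᵢ > 0 for all 1 ≤ i ≤ m and Σ_{i=1}^m aᵢ = 1, and let c = min_{1≤i≤m} aᵢ. Then for every η > 0 there exist an integer k ≥ m/(c·η) and real numbers b₁, b₂, …, b_m such that: (1) each bᵢ is a positive multiple of 1/k; (2) Σ_{i=1}^m bᵢ = 1; and (3) for all 1 ≤ i ≤ m, aᵢ/bᵢ ≤ 1 + η and bᵢ/aᵢ ≤ 1 + η. -/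
set_option maxHeartbeats 1000000


/-- **Rational approximation of probability distributions.**
Let `a₁, …, a_m` be positive reals summing to 1 and let `c = min_i a_i`. For every
`η > 0` there exist an integer `k ≥ m/(c·η)` and reals `b₁, …, b_m` such that each
`b i` is a positive multiple of `1/k`, the `b i` sum to 1, and for all `i`,
`a i / b i ≤ 1 + η` and `b i / a i ≤ 1 + η`. -/
theorem rational_approximation_of_distribution
    (m : ℕ) (hm : 0 < m) (a : Fin m → ℝ) (ha : ∀ i, 0 < a i)
    (hsum : (∑ i, a i) = 1) (c : ℝ) (hc : c = ⨅ i, a i)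
    (η : ℝ) (hη : 0 < η) :
    ∃ (k : ℕ) (b : Fin m → ℝ),
      (m : ℝ) / (c * η) ≤ (k : ℝ) ∧
      (∀ i, ∃ j : ℕ, 0 < j ∧ b i = (j : ℝ) / (k : ℝ)) ∧
      (∑ i, b i) = 1 ∧
      ∀ i, a i / b i ≤ 1 + η ∧ b i / a i ≤ 1 + η := by
  have hne : Nonempty (Fin m) := ⟨⟨0, hm⟩⟩
  obtain ⟨i₀, hi₀⟩ := Finite.exists_min a
  have hcle : ∀ i, c ≤ a i := by
    intro i; rw [hc]; exact ciInf_le (Finite.bddBelow_range a) i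
  have hceq : c = a i₀ := by
    rw [hc]
    exact le_antisymm (ciInf_le (Finite.bddBelow_range a) i₀) (le_ciInf hi₀)
  have hcpos : 0 < c := hceq ▸ ha i₀
  have hcη : 0 < c * η := mul_pos hcpos hη
  set K : ℕ := ⌈((m : ℝ) + 1 + η) / (c * η)⌉₊ with hKdef
  have hK : ((m : ℝ) + 1 + η) / (c * η) ≤ K := Nat.le_ceil _
  have hK1 : (m : ℝ) / (c * η) ≤ K := by
    refine le_trans (div_le_div_of_nonneg_right ?_ hcη.le) hK
    linarith
  have hK2 : (1 + η) / (c * η) ≤ K := by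
    refine le_trans (div_le_div_of_nonneg_right ?_ hcη.le) hK
    have h0 : (0:ℝ) ≤ m := Nat.cast_nonneg m
    linarith
  have hKpos : 0 < (K : ℝ) := lt_of_lt_of_le (by positivity) hK2
  have hKcη : 1 + η ≤ (K : ℝ) * (c * η) := by
    rw [div_le_iff₀ hcη] at hK2; linarith
  have hKm : (m : ℝ) ≤ (K : ℝ) * (c * η) := by
    rw [div_le_iff₀ hcη] at hK1; linarith
  -- K * c ≥ (1+η)/η > 1, hence K * a i ≥ 1 for all i
  have hKa1 : ∀ i, 1 ≤ (K : ℝ) * a i := by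
    intro i
    have h1 : (K : ℝ) * c * η ≥ 1 + η := by nlinarith
    have h2 : (K : ℝ) * c ≥ 1 := by nlinarith
    have := hcle i
    nlinarith
  set n : Fin m → ℕ := fun i => ⌊(K : ℝ) * a i⌋₊ with hndef
  have hn_le : ∀ i, (n i : ℝ) ≤ (K : ℝ) * a i := by
    intro i
    exact Nat.floor_le (mul_nonneg hKpos.le (ha i).le)
  have hn_gt : ∀ i, (K : ℝ) * a i - 1 < (n i : ℝ) := by
    intro i
    exact Nat.sub_one_lt_floor _
  have hn_pos : ∀ i, 1 ≤ n i := by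
    intro i
    exact Nat.le_floor (by simpa using hKa1 i)
  set E : Finset (Fin m) := Finset.univ.erase i₀ with hEdef
  set S : ℕ := ∑ j ∈ E, n j with hSdef
  have hcardE : (E.card : ℝ) = (m : ℝ) - 1 := by
    have : E.card = m - 1 := by
      rw [hEdef, Finset.card_erase_of_mem (Finset.mem_univ i₀), Finset.card_univ,
        Fintype.card_fin]
    rw [this, Nat.cast_sub hm, Nat.cast_one]
  have hsumE : ∑ j ∈ E, a j = 1 - a i₀ := by
    have := Finset.add_sum_erase Finset.univ a (Finset.mem_univ i₀)
    rw [hsum] at this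
    rw [hEdef]; linarith
  have hS_le : (S : ℝ) ≤ (K : ℝ) * (1 - a i₀) := by
    rw [hSdef]
    push_cast
    calc ∑ j ∈ E, (n j : ℝ) ≤ ∑ j ∈ E, (K : ℝ) * a j :=
          Finset.sum_le_sum fun j _ => hn_le j
      _ = (K : ℝ) * (1 - a i₀) := by rw [← Finset.mul_sum, hsumE]
  have hS_gt : (K : ℝ) * (1 - a i₀) - ((m : ℝ) - 1) ≤ (S : ℝ) := by
    rw [hSdef]
    push_cast
    have : ∑ j ∈ E, ((K : ℝ) * a j - 1) ≤ ∑ j ∈ E, (n j : ℝ) :=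
      Finset.sum_le_sum fun j _ => (hn_gt j).le
    have hsum2 : ∑ j ∈ E, ((K : ℝ) * a j - 1) = (K : ℝ) * (1 - a i₀) - ((m : ℝ) - 1) := by
      rw [Finset.sum_sub_distrib, ← Finset.mul_sum, hsumE, Finset.sum_const, nsmul_eq_mul,
        mul_one, hcardE]
    linarith
  have hSK : S < K := by
    have h1 : (S : ℝ) ≤ (K : ℝ) - (K : ℝ) * a i₀ := by nlinarith [hS_le]
    have h2 : (S : ℝ) < (K : ℝ) := by nlinarith [hKa1 i₀]
    exact_mod_cast h2
  have hKS : ((K - S : ℕ) : ℝ) = (K : ℝ) - (S : ℝ) := by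
    rw [Nat.cast_sub hSK.le]
  refine ⟨K, fun i => if i = i₀ then ((K - S : ℕ) : ℝ) / K else (n i : ℝ) / K, hK1, ?_, ?_, ?_⟩
  · intro i
    by_cases hi : i = i₀
    · exact ⟨K - S, by omega, by simp [hi]⟩
    · exact ⟨n i, hn_pos i, by simp [hi]⟩
  · rw [← Finset.add_sum_erase Finset.univ _ (Finset.mem_univ i₀)]
    simp only [if_pos rfl]
    have : ∑ j ∈ Finset.univ.erase i₀, (if j = i₀ then ((K - S : ℕ) : ℝ) / K else (n j : ℝ) / K)
        = ∑ j ∈ E, (n j : ℝ) / K := by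
      apply Finset.sum_congr rfl
      intro j hj
      rw [if_neg (Finset.ne_of_mem_erase hj)]
    rw [this, ← Finset.sum_div, hKS]
    have hScast : ((S : ℕ) : ℝ) = ∑ j ∈ E, (n j : ℝ) := by rw [hSdef]; push_cast; ring
    rw [← hScast]
    rw [if_pos trivial]
    field_simp; ring
  · intro i
    have hb_bounds : ∀ x : ℝ, a i / (1 + η) ≤ x → x ≤ a i * (1 + η) → 0 < x →
        a i / x ≤ 1 + η ∧ x / a i ≤ 1 + η := by
      intro x h1 h2 hx
      constructor
      · rw [div_le_iff₀ hx]
        rw [div_le_iff₀ (by linarith : (0:ℝ) < 1 + η)] at h1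
        linarith
      · rw [div_le_iff₀ (ha i)]
        linarith
    by_cases hi : i = i₀
    · subst hi
      simp only [if_pos rfl, hKS]
      have hlow : a i ≤ ((K : ℝ) - S) / K := by
        rw [le_div_iff₀ hKpos]
        nlinarith [hS_le]
      have hhigh : ((K : ℝ) - S) / K ≤ a i * (1 + η) := by
        rw [div_le_iff₀ hKpos]
        have h1 : (K : ℝ) - S ≤ (K : ℝ) * a i + ((m : ℝ) - 1) := by nlinarith [hS_gt]
        have h2 : ((m : ℝ) - 1) ≤ (K : ℝ) * (c * η) - 1 := by linarith [hKm]
        have h3 : c = a i := hceq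
        nlinarith [hKcη]
      refine hb_bounds _ ?_ hhigh (lt_of_lt_of_le (ha i) hlow)
      calc a i / (1 + η) ≤ a i := by
            rw [div_le_iff₀ (by linarith : (0:ℝ) < 1 + η)]; nlinarith [ha i]
        _ ≤ ((K : ℝ) - S) / K := hlow
    · simp only [if_neg hi]
      have hlow : a i / (1 + η) ≤ (n i : ℝ) / K := by
        rw [div_le_div_iff₀ (by linarith : (0:ℝ) < 1 + η) hKpos]
        have h1 : (K : ℝ) * a i - 1 < (n i : ℝ) := hn_gt i
        have h2 : (1 : ℝ) + η ≤ (K : ℝ) * (c * η) := hKcη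
        have h3 : c ≤ a i := hcle i
        -- need: a i * K ≤ n i * (1+η); from n i > K a i - 1 and K a i η ≥ 1 + η
        nlinarith [hη.le, hKpos.le]
      have hhigh : (n i : ℝ) / K ≤ a i * (1 + η) := by
        rw [div_le_iff₀ hKpos]
        have := hn_le i
        nlinarith [ha i, hη.le, hKpos.le]
      have hbpos : 0 < (n i : ℝ) / K := by
        have : (1 : ℝ) ≤ (n i : ℝ) := by exact_mod_cast hn_pos i
        positivity
      exact hb_bounds _ hlow hhigh hbpos
end
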